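/- arXiv:2201.10172 — 5 statements merged into one kernel-verified Lean document; each statement's English description precedes it below -/
import Mathlib

section
/- Let G = BS(m,n) be the Baumslag–Solitar group with 0 < m ≤ |n|. Then for every integer c ≥ 2, the quotient group γ_c(G)/γ_{c+1}(G) of consecutive terms of the lower central series of G is finite. -/
def BSRels (m n : ℤ) : Set (FreeGroup (Fin 2)) :=
  {(FreeGroup.of 0)⁻¹ * (FreeGroup.of 1) ^ m * FreeGroup.of 0 * ((FreeGroup.of 1) ^ n)⁻¹}

/-- The Baumslag–Solitar group `BS(m,n) = ⟨t, a ∣ t⁻¹ aᵐ t = aⁿ⟩`. -/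
abbrev BS (m n : ℤ) : Type := PresentedGroup (BSRels m n)

/-- The generator `t` of `BS(m,n)`. -/
def BS.t (m n : ℤ) : BS m n := PresentedGroup.of 0

/-- The generator `a` of `BS(m,n)`. -/
def BS.a (m n : ℤ) : BS m n := PresentedGroup.of 1

/-- `γ_ω(G)`: the intersection of all terms of the lower central series
(`lowerCentralSeries G c` is `γ_{c+1}(G)`). -/
def lcsOmega (G : Type*) [Group G] : Subgroup G := ⨅ c : ℕ, (⊤ : Subgroup G).lowerCentralSeries c

/-- The commutator `[x,y] = x⁻¹y⁻¹xy`. -/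
def commElt {G : Type*} [Group G] (x y : G) : G := x⁻¹ * y⁻¹ * x * y

open scoped commutatorElement

section Helpers
variable {Q : Type*} [Group Q]

lemma comm_mul_left' (x y s : Q) :
    ⁅x * y, s⁆ = (x * ⁅y, s⁆ * x⁻¹) * ⁅x, s⁆ := by
  simp only [commutatorElement_def]; group

lemma comm_mul_right' (x g h : Q) :
    ⁅x, g * h⁆ = ⁅x, g⁆ * (g * ⁅x, h⁆ * g⁻¹) := by
  simp only [commutatorElement_def]; group

lemma central_conj {z : Q} (hz : z ∈ Subgroup.center Q) (g : Q) : g * z * g⁻¹ = z := by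
  rw [Subgroup.mem_center_iff.mp hz g, mul_assoc, mul_inv_cancel, mul_one]

lemma comm_eq_one_of_central_left {z : Q} (hz : z ∈ Subgroup.center Q) (g : Q) :
    ⁅z, g⁆ = 1 :=
  commutatorElement_eq_one_iff_mul_comm.mpr ((Subgroup.mem_center_iff.mp hz g).symm)

lemma comm_eq_one_of_central_right {z : Q} (hz : z ∈ Subgroup.center Q) (g : Q) :
    ⁅g, z⁆ = 1 :=
  commutatorElement_eq_one_iff_mul_comm.mpr (Subgroup.mem_center_iff.mp hz g)

lemma lcs_succ_eq (d : ℕ) :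
    (⊤ : Subgroup Q).lowerCentralSeries (d + 1) = ⁅(⊤ : Subgroup Q).lowerCentralSeries d, (⊤ : Subgroup Q)⁆ := rfl

lemma comm_mem_lcs_succ {d : ℕ} {z : Q} (hz : z ∈ (⊤ : Subgroup Q).lowerCentralSeries d) (g : Q) :
    ⁅z, g⁆ ∈ (⊤ : Subgroup Q).lowerCentralSeries (d + 1) := by
  rw [lcs_succ_eq]
  exact Subgroup.commutator_mem_commutator hz (Subgroup.mem_top g)

lemma lcs_le_center {d : ℕ} (hbot : (⊤ : Subgroup Q).lowerCentralSeries (d + 2) = ⊥) :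
    (⊤ : Subgroup Q).lowerCentralSeries (d + 1) ≤ Subgroup.center Q := by
  intro x hx
  rw [Subgroup.mem_center_iff]
  intro g
  have h : ⁅x, g⁆ ∈ (⊤ : Subgroup Q).lowerCentralSeries (d + 2) := comm_mem_lcs_succ hx g
  rw [hbot, Subgroup.mem_bot] at h
  exact (commutatorElement_eq_one_iff_mul_comm.mp h).symm

lemma comm_central {d : ℕ} (hbot : (⊤ : Subgroup Q).lowerCentralSeries (d + 2) = ⊥) {z : Q}
    (hz : z ∈ (⊤ : Subgroup Q).lowerCentralSeries d) (g : Q) : ⁅z, g⁆ ∈ Subgroup.center Q :=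
  lcs_le_center hbot (comm_mem_lcs_succ hz g)

lemma comm_mul_left_central {M : Subgroup Q}
    (hc : ∀ z ∈ M, ∀ g : Q, ⁅z, g⁆ ∈ Subgroup.center Q)
    {x y : Q} (hy : y ∈ M) (s : Q) : ⁅x * y, s⁆ = ⁅y, s⁆ * ⁅x, s⁆ := by
  rw [comm_mul_left', central_conj (hc y hy s) x]

lemma comm_pow_left_central {M : Subgroup Q}
    (hc : ∀ z ∈ M, ∀ g : Q, ⁅z, g⁆ ∈ Subgroup.center Q)
    {y : Q} (hy : y ∈ M) (s : Q) : ∀ k : ℕ, ⁅y ^ k, s⁆ = ⁅y, s⁆ ^ k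
  | 0 => by simp [commutatorElement_one_left]
  | (k + 1) => by
    rw [pow_succ', comm_mul_left_central hc (pow_mem hy k) s,
      comm_pow_left_central hc hy s k, pow_succ]

/-- For `x` with all commutators `⁅x, ·⁆` central, `g ↦ ⁅x, g⁆` is a homomorphism. -/
def commHomR {M : Subgroup Q} (hc : ∀ z ∈ M, ∀ g : Q, ⁅z, g⁆ ∈ Subgroup.center Q)
    {x : Q} (hx : x ∈ M) : Q →* Q where
  toFun g := ⁅x, g⁆
  map_one' := commutatorElement_one_right x
  map_mul' g h := by show ⁅x, g * h⁆ = ⁅x, g⁆ * ⁅x, h⁆; rw [comm_mul_right', central_conj (hc x hx h) g]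

end Helpers
section KeyGen
variable {Q : Type*} [Group Q]

lemma keyGen (d : ℕ) (hbot : (⊤ : Subgroup Q).lowerCentralSeries (d + 2) = ⊥)
    (S T : Set Q) (hS : Subgroup.closure S = ⊤)
    (hT : T ⊆ ((⊤ : Subgroup Q).lowerCentralSeries d : Set Q))
    (hcov : (⊤ : Subgroup Q).lowerCentralSeries d ≤ Subgroup.closure T ⊔ (⊤ : Subgroup Q).lowerCentralSeries (d + 1)) :
    (⊤ : Subgroup Q).lowerCentralSeries (d + 1) ≤
      Subgroup.closure (Set.image2 (fun y s => ⁅y, s⁆) T S) := by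
  set C' := Subgroup.closure (Set.image2 (fun y s => ⁅y, s⁆) T S) with hC'
  have hc : ∀ z ∈ (⊤ : Subgroup Q).lowerCentralSeries d, ∀ g : Q, ⁅z, g⁆ ∈ Subgroup.center Q :=
    fun z hz g => comm_central hbot hz g
  have key : ∀ s ∈ S, ∀ x ∈ (⊤ : Subgroup Q).lowerCentralSeries d, ⁅x, s⁆ ∈ C' := by
    intro s hs x hx
    have hx' : x ∈ Subgroup.closure (T ∪ ((⊤ : Subgroup Q).lowerCentralSeries (d + 1) : Set Q)) := by
      rw [Subgroup.closure_union, Subgroup.closure_eq]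
      exact hcov hx
    clear hx
    have main : x ∈ (⊤ : Subgroup Q).lowerCentralSeries d ∧ ⁅x, s⁆ ∈ C' := by
      induction hx' using Subgroup.closure_induction with
      | mem z hz =>
        rcases hz with hz | hz
        · exact ⟨hT hz, Subgroup.subset_closure (Set.mem_image2_of_mem hz hs)⟩
        · refine ⟨Subgroup.lowerCentralSeries_antitone _ (Nat.le_succ d) hz, ?_⟩
          rw [comm_eq_one_of_central_left (lcs_le_center hbot hz) s]
          exact one_mem _
      | one => exact ⟨one_mem _, by rw [commutatorElement_one_left]; exact one_mem _⟩
      | mul z w _ _ hz hw =>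
        exact ⟨mul_mem hz.1 hw.1,
          by rw [comm_mul_left_central hc hw.1 s]; exact mul_mem hw.2 hz.2⟩
      | inv z _ hz =>
        refine ⟨inv_mem hz.1, ?_⟩
        have h1 : ⁅z⁻¹ * z, s⁆ = ⁅z, s⁆ * ⁅z⁻¹, s⁆ := comm_mul_left_central hc hz.1 s
        rw [inv_mul_cancel, commutatorElement_one_left] at h1
        have h2 : ⁅z, s⁆⁻¹ = ⁅z⁻¹, s⁆ := inv_eq_of_mul_eq_one_right h1.symm
        exact h2 ▸ inv_mem hz.2
    exact main.2
  rw [lcs_succ_eq, Subgroup.commutator_le]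
  intro x hx g _
  have hmem : (commHomR hc hx) g ∈ (Subgroup.closure S).map (commHomR hc hx) :=
    Subgroup.mem_map_of_mem _ (by rw [hS]; exact Subgroup.mem_top g)
  rw [MonoidHom.map_closure] at hmem
  have hle : Subgroup.closure ((commHomR hc hx) '' S) ≤ C' := by
    rw [Subgroup.closure_le]
    rintro _ ⟨s, hs, rfl⟩
    exact key s hs x hx
  exact hle hmem

end KeyGen
section Finiteness
variable {Q : Type*} [Group Q]

lemma finite_closure_central_torsion (T : Set Q) (hfin : T.Finite)
    (hcent : T ⊆ Subgroup.center Q)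
    (htor : ∀ x ∈ T, ∃ k : ℕ, 0 < k ∧ x ^ k = 1) :
    Finite (Subgroup.closure T) := by
  set Z := Subgroup.center Q
  letI : CommGroup Z := { (inferInstance : Group Z) with
    mul_comm := fun a b => Subtype.ext (Subgroup.mem_center_iff.mp b.2 a) }
  set T' : Set Z := {z : Z | (z : Q) ∈ T} with hT'
  have himg : (Z.subtype) '' T' = T := by
    ext x
    constructor
    · rintro ⟨z, hz, rfl⟩; exact hz
    · intro hx; exact ⟨⟨x, hcent hx⟩, hx, rfl⟩
  have hmap : (Subgroup.closure T').map Z.subtype = Subgroup.closure T := by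
    rw [MonoidHom.map_closure, himg]
  have hfin' : T'.Finite := hfin.preimage (Subtype.val_injective.injOn)
  haveI : Group.FG ↥(Subgroup.closure T') := by
    rw [Group.fg_iff_subgroup_fg]
    exact ⟨hfin'.toFinset, by rw [Set.Finite.coe_toFinset]⟩
  have htors : IsMulTorsion ↥(Subgroup.closure T') := by
    have hle : Subgroup.closure T' ≤ CommGroup.torsion Z := by
      rw [Subgroup.closure_le]
      intro z hz
      obtain ⟨k, hk, h1⟩ := htor (z : Q) hz
      show IsOfFinOrder z
      refine isOfFinOrder_iff_pow_eq_one.mpr ⟨k, hk, ?_⟩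
      exact Subtype.ext (by simpa using h1)
    intro x
    have hfo : IsOfFinOrder (x : Z) := hle x.2
    obtain ⟨k, hk, h1⟩ := isOfFinOrder_iff_pow_eq_one.mp hfo
    exact isOfFinOrder_iff_pow_eq_one.mpr ⟨k, hk, Subtype.ext (by simpa using h1)⟩
  haveI : Finite ↥(Subgroup.closure T') := CommGroup.finite_of_fg_isMulTorsion _ htors
  rw [← hmap]
  have : ((Subgroup.closure T').map Z.subtype : Set Q) =
      (Z.subtype) '' (Subgroup.closure T' : Set Z) := Subgroup.coe_map _ _
  have hsf : ((Subgroup.closure T').map Z.subtype : Set Q).Finite := by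
    rw [this]
    exact Set.Finite.image _ (Set.toFinite _)
  exact hsf

lemma map_lcs {G H : Type*} [Group G] [Group H] (f : G →* H) (hf : Function.Surjective f) :
    ∀ j, ((⊤ : Subgroup G).lowerCentralSeries j).map f = (⊤ : Subgroup H).lowerCentralSeries j
  | 0 => by
    rw [Subgroup.lowerCentralSeries_zero, Subgroup.lowerCentralSeries_zero, ← MonoidHom.range_eq_map,
      MonoidHom.range_eq_top.mpr hf]
  | (j + 1) => by
    rw [lcs_succ_eq, lcs_succ_eq, Subgroup.map_commutator, map_lcs f hf j,
      ← MonoidHom.range_eq_map, MonoidHom.range_eq_top.mpr hf]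

lemma finite_quot_of_finite_map {G : Type*} [Group G] {H N : Subgroup G} [N.Normal]
    (h : Finite (H.map (QuotientGroup.mk' N))) : Finite (H ⧸ N.subgroupOf H) := by
  set φ := (QuotientGroup.mk' N).comp H.subtype with hφ
  have hker : φ.ker = N.subgroupOf H := by
    rw [hφ, ← MonoidHom.comap_ker, QuotientGroup.ker_mk']
    rfl
  have hrange : φ.range = H.map (QuotientGroup.mk' N) := by
    rw [hφ, MonoidHom.range_comp, Subgroup.range_subtype]
  haveI : Finite φ.range := by rw [hrange]; exact h
  have e := QuotientGroup.quotientKerEquivRange φ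
  rw [← hker]
  exact Finite.of_equiv _ e.toEquiv.symm

lemma comm_pow_mem {G : Type*} [Group G] {d : ℕ} {y : G}
    (hy : y ∈ (⊤ : Subgroup G).lowerCentralSeries d) (s : G) {k : ℕ}
    (hk : y ^ k ∈ (⊤ : Subgroup G).lowerCentralSeries (d + 1)) :
    ⁅y, s⁆ ^ k ∈ (⊤ : Subgroup G).lowerCentralSeries (d + 2) := by
  set N := (⊤ : Subgroup G).lowerCentralSeries (d + 2) with hN
  set π := QuotientGroup.mk' N with hπ
  have hsurj : Function.Surjective π := QuotientGroup.mk'_surjective N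
  have hbot : (⊤ : Subgroup (G ⧸ N)).lowerCentralSeries (d + 2) = ⊥ := by
    rw [← map_lcs π hsurj (d + 2), Subgroup.map_eq_bot_iff, QuotientGroup.ker_mk']
  have hc : ∀ z ∈ (⊤ : Subgroup (G ⧸ N)).lowerCentralSeries d, ∀ g : G ⧸ N, ⁅z, g⁆ ∈ Subgroup.center (G ⧸ N) :=
    fun z hz g => comm_central hbot hz g
  have h1 : π y ∈ (⊤ : Subgroup (G ⧸ N)).lowerCentralSeries d := by
    rw [← map_lcs π hsurj d]
    exact Subgroup.mem_map_of_mem π hy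
  have h2 : (π y) ^ k ∈ (⊤ : Subgroup (G ⧸ N)).lowerCentralSeries (d + 1) := by
    rw [← map_pow, ← map_lcs π hsurj (d + 1)]
    exact Subgroup.mem_map_of_mem π hk
  have h3 : π (⁅y, s⁆ ^ k) = 1 := by
    rw [map_pow, map_commutatorElement, ← comm_pow_left_central hc h1 (π s) k,
      comm_eq_one_of_central_left (lcs_le_center hbot h2) (π s)]
  have h4 : ⁅y, s⁆ ^ k ∈ π.ker := h3
  rwa [hπ, QuotientGroup.ker_mk'] at h4

end Finiteness
lemma finite_lcs_quot_step {G : Type*} [Group G] (d : ℕ) (S T₀ : Set G)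
    (hS : Subgroup.closure S = ⊤) (hSfin : S.Finite) (hT₀fin : T₀.Finite)
    (hT₀ : T₀ ⊆ ((⊤ : Subgroup G).lowerCentralSeries d : Set G))
    (hcov : (⊤ : Subgroup G).lowerCentralSeries d ≤ Subgroup.closure T₀ ⊔ (⊤ : Subgroup G).lowerCentralSeries (d + 1))
    (htor : ∀ y ∈ T₀, ∀ s ∈ S, ∃ k : ℕ, 0 < k ∧ ⁅y, s⁆ ^ k ∈ (⊤ : Subgroup G).lowerCentralSeries (d + 2)) :
    Finite (((⊤ : Subgroup G).lowerCentralSeries (d + 1)) ⧸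
      (((⊤ : Subgroup G).lowerCentralSeries (d + 2)).subgroupOf ((⊤ : Subgroup G).lowerCentralSeries (d + 1)))) := by
  set N := (⊤ : Subgroup G).lowerCentralSeries (d + 2) with hN
  set π := QuotientGroup.mk' N with hπ
  have hsurj : Function.Surjective π := QuotientGroup.mk'_surjective N
  have hbot : (⊤ : Subgroup (G ⧸ N)).lowerCentralSeries (d + 2) = ⊥ := by
    rw [← map_lcs π hsurj (d + 2), Subgroup.map_eq_bot_iff, hπ, QuotientGroup.ker_mk']
  have hs' : Subgroup.closure (π '' S) = ⊤ := by
    rw [← MonoidHom.map_closure, hS, ← MonoidHom.range_eq_map, MonoidHom.range_eq_top.mpr hsurj]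
  have ht' : (π '' T₀) ⊆ ((⊤ : Subgroup (G ⧸ N)).lowerCentralSeries d : Set (G ⧸ N)) := by
    rintro _ ⟨y, hy, rfl⟩
    rw [← map_lcs π hsurj d]
    exact Subgroup.mem_map_of_mem π (hT₀ hy)
  have hcov' : (⊤ : Subgroup (G ⧸ N)).lowerCentralSeries d ≤
      Subgroup.closure (π '' T₀) ⊔ (⊤ : Subgroup (G ⧸ N)).lowerCentralSeries (d + 1) := by
    rw [← map_lcs π hsurj d, ← map_lcs π hsurj (d + 1), ← MonoidHom.map_closure,
      ← Subgroup.map_sup]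
    exact Subgroup.map_mono hcov
  have hkg := keyGen d hbot (π '' S) (π '' T₀) hs' ht' hcov'
  have hfinC : Finite (Subgroup.closure
      (Set.image2 (fun y s => ⁅y, s⁆) (π '' T₀) (π '' S))) := by
    apply finite_closure_central_torsion
    · exact Set.Finite.image2 _ (hT₀fin.image π) (hSfin.image π)
    · rintro _ ⟨u, hu, v, hv, rfl⟩
      exact comm_central hbot (ht' hu) v
    · rintro _ ⟨u, ⟨y, hy, rfl⟩, v, ⟨s, hs, rfl⟩, rfl⟩
      obtain ⟨k, hk, hmem⟩ := htor y hy s hs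
      refine ⟨k, hk, ?_⟩
      show ⁅π y, π s⁆ ^ k = 1
      rw [← map_commutatorElement, ← map_pow]
      exact (QuotientGroup.eq_one_iff _).mpr hmem
  apply finite_quot_of_finite_map
  rw [map_lcs π hsurj (d + 1)]
  exact Finite.of_injective (Subgroup.inclusion hkg) (Subgroup.inclusion_injective hkg)
lemma BS_rel (m n : ℤ) :
    (BS.t m n)⁻¹ * (BS.a m n) ^ m * (BS.t m n) * ((BS.a m n) ^ n)⁻¹ = 1 := by
  have hr : ((FreeGroup.of 0)⁻¹ * (FreeGroup.of 1) ^ m * FreeGroup.of 0 *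
      ((FreeGroup.of 1) ^ n)⁻¹ : FreeGroup (Fin 2)) ∈ Subgroup.normalClosure (BSRels m n) :=
    Subgroup.subset_normalClosure rfl
  have h1 : PresentedGroup.mk (BSRels m n)
      ((FreeGroup.of 0)⁻¹ * (FreeGroup.of 1) ^ m * FreeGroup.of 0 *
        ((FreeGroup.of 1) ^ n)⁻¹) = 1 :=
    (QuotientGroup.eq_one_iff _).mpr hr
  simpa only [map_mul, map_inv, map_zpow, BS.t, BS.a, PresentedGroup.of] using h1

lemma BS_comm_tor (m n : ℤ) (hm : 0 < m) : ∃ k : ℕ, 0 < k ∧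
    ⁅BS.t m n, BS.a m n⁆ ^ k ∈ (⊤ : Subgroup (BS m n)).lowerCentralSeries 2 := by
  set G := BS m n with hG
  set N := (⊤ : Subgroup G).lowerCentralSeries 2 with hN
  set π := QuotientGroup.mk' N with hπ
  have hsurj : Function.Surjective π := QuotientGroup.mk'_surjective N
  have hbot : (⊤ : Subgroup (G ⧸ N)).lowerCentralSeries (0 + 2) = ⊥ := by
    rw [← map_lcs π hsurj (0 + 2), Subgroup.map_eq_bot_iff, hπ, QuotientGroup.ker_mk']
  have hc : ∀ z ∈ (⊤ : Subgroup (G ⧸ N)), ∀ g : G ⧸ N, ⁅z, g⁆ ∈ Subgroup.center (G ⧸ N) :=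
    fun z hz g => comm_central (d := 0) hbot (by simpa using hz) g
  set tb := π (BS.t m n) with htb
  set ab := π (BS.a m n) with hab
  have hrelQ : tb⁻¹ * ab ^ m * tb * (ab ^ n)⁻¹ = 1 := by
    have h0 := congrArg π (BS_rel m n)
    simpa only [map_mul, map_inv, map_zpow, map_one] using h0
  have hrel : tb⁻¹ * ab ^ m * tb = ab ^ n := by
    rw [← mul_inv_eq_one]
    exact hrelQ
  have hcd : ∀ j : ℤ, ⁅tb, ab⁆ ^ j = ⁅tb, ab ^ j⁆ := by
    intro j
    have h1 : ⁅tb, ab ^ j⁆ = (commHomR hc (Subgroup.mem_top tb)) (ab ^ j) := rfl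
    rw [h1, map_zpow]
    rfl
  have pull : ∀ k : ℕ, ⁅tb, ab⁆ ^ k = 1 → ⁅BS.t m n, BS.a m n⁆ ^ k ∈ N := by
    intro k hk1
    have h2 : π (⁅BS.t m n, BS.a m n⁆ ^ k) = 1 := by
      rw [map_pow, map_commutatorElement]
      exact hk1
    exact (QuotientGroup.eq_one_iff _).mp h2
  by_cases hnm : n - m = 0
  · refine ⟨m.toNat, by omega, ?_⟩
    apply pull
    have heq : tb⁻¹ * ab ^ m * tb = ab ^ m := by
      rw [hrel]
      congr 1
      omega
    have hcom : tb * ab ^ m = ab ^ m * tb := by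
      conv_lhs => rw [← heq]
      group
    have h3 : ⁅tb, ab⁆ ^ (m : ℤ) = 1 := by
      rw [hcd m, commutatorElement_eq_one_iff_mul_comm.mpr hcom]
    calc ⁅tb, ab⁆ ^ m.toNat = ⁅tb, ab⁆ ^ (m.toNat : ℤ) := (zpow_natCast _ _).symm
      _ = ⁅tb, ab⁆ ^ (m : ℤ) := by rw [Int.toNat_of_nonneg hm.le]
      _ = 1 := h3
  · refine ⟨(n - m).natAbs, Int.natAbs_pos.mpr hnm, ?_⟩
    apply pull
    have hd : ab ^ (n - m) ∈ Subgroup.center (G ⧸ N) := by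
      have h1 : ab ^ (n - m) = ⁅tb⁻¹, ab ^ m⁆ := by
        rw [commutatorElement_def, inv_inv]
        calc ab ^ (n - m) = ab ^ n * (ab ^ m)⁻¹ := by
              rw [← zpow_neg, ← zpow_add, Int.sub_eq_add_neg]
          _ = tb⁻¹ * ab ^ m * tb * (ab ^ m)⁻¹ := by rw [hrel]
      rw [h1]
      exact comm_central (d := 0) hbot (Subgroup.mem_top _) _
    have h3 : ⁅tb, ab⁆ ^ (n - m) = 1 := by
      rw [hcd (n - m)]
      exact comm_eq_one_of_central_right hd tb
    rcases Int.natAbs_eq (n - m) with h | h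
    · calc ⁅tb, ab⁆ ^ (n - m).natAbs = ⁅tb, ab⁆ ^ (((n - m).natAbs : ℤ)) :=
          (zpow_natCast _ _).symm
        _ = ⁅tb, ab⁆ ^ (n - m) := by rw [← h]
        _ = 1 := h3
    · calc ⁅tb, ab⁆ ^ (n - m).natAbs = ⁅tb, ab⁆ ^ (((n - m).natAbs : ℤ)) :=
          (zpow_natCast _ _).symm
        _ = ⁅tb, ab⁆ ^ (-(n - m)) := by rw [show ((n - m).natAbs : ℤ) = -(n - m) by omega]
        _ = 1 := by rw [zpow_neg, h3, inv_one]
lemma BS_gens (m n : ℤ) :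
    Subgroup.closure (Set.range (PresentedGroup.of : Fin 2 → BS m n)) = ⊤ :=
  PresentedGroup.closure_range_of _

lemma aux_main (m n : ℤ) (hm : 0 < m) : ∀ b : ℕ, 1 ≤ b →
    Finite (((⊤ : Subgroup (BS m n)).lowerCentralSeries b) ⧸
      (((⊤ : Subgroup (BS m n)).lowerCentralSeries (b + 1)).subgroupOf ((⊤ : Subgroup (BS m n)).lowerCentralSeries b))) := by
  intro b hb
  set S : Set (BS m n) := Set.range (PresentedGroup.of : Fin 2 → BS m n) with hSdef
  have hS : Subgroup.closure S = ⊤ := BS_gens m n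
  have hSfin : S.Finite := Set.finite_range _
  induction b, hb using Nat.le_induction with
  | base =>
    apply finite_lcs_quot_step 0 S S hS hSfin hSfin
    · intro x _
      exact Subgroup.mem_top x
    · rw [Subgroup.lowerCentralSeries_zero, hS]
      exact le_sup_left
    · rintro _ ⟨i, rfl⟩ _ ⟨j, rfl⟩
      fin_cases i <;> fin_cases j
      · exact ⟨1, one_pos, by rw [commutatorElement_self, one_pow]; exact one_mem _⟩
      · -- ⁅of 0, of 1⁆ = ⁅t, a⁆
        exact BS_comm_tor m n hm
      · -- ⁅of 1, of 0⁆ = ⁅a, t⁆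
        obtain ⟨k, hk, hmem⟩ := BS_comm_tor m n hm
        refine ⟨k, hk, ?_⟩
        show ⁅(PresentedGroup.of 1 : BS m n), PresentedGroup.of 0⁆ ^ k ∈
          (⊤ : Subgroup (BS m n)).lowerCentralSeries (0 + 2)
        have h1 : ⁅(PresentedGroup.of 1 : BS m n), PresentedGroup.of 0⁆ ^ k =
            (⁅BS.t m n, BS.a m n⁆ ^ k)⁻¹ := by
          rw [← commutatorElement_inv, inv_pow]
          rfl
        rw [h1]
        exact inv_mem hmem
      · exact ⟨1, one_pos, by rw [commutatorElement_self, one_pow]; exact one_mem _⟩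
  | succ b hb ih =>
    haveI : Finite (((⊤ : Subgroup (BS m n)).lowerCentralSeries b) ⧸
        (((⊤ : Subgroup (BS m n)).lowerCentralSeries (b + 1)).subgroupOf ((⊤ : Subgroup (BS m n)).lowerCentralSeries b))) := ih
    set F := ((⊤ : Subgroup (BS m n)).lowerCentralSeries b) ⧸
        (((⊤ : Subgroup (BS m n)).lowerCentralSeries (b + 1)).subgroupOf ((⊤ : Subgroup (BS m n)).lowerCentralSeries b)) with hF
    set T₀ : Set (BS m n) :=
      Set.range (fun q : F => ((Quotient.out q : (⊤ : Subgroup (BS m n)).lowerCentralSeries b) : BS m n))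
      with hT₀def
    apply finite_lcs_quot_step b S T₀ hS hSfin
    · exact Set.finite_range _
    · rintro _ ⟨q, rfl⟩
      exact (Quotient.out q).2
    · -- covering
      intro x hx
      set ξ : ((⊤ : Subgroup (BS m n)).lowerCentralSeries b) := ⟨x, hx⟩ with hξ
      set q : F := QuotientGroup.mk ξ with hq
      have h1 : QuotientGroup.mk (Quotient.out q) = q := QuotientGroup.out_eq' q
      have h2 : (Quotient.out q)⁻¹ * ξ ∈
          ((⊤ : Subgroup (BS m n)).lowerCentralSeries (b + 1)).subgroupOf ((⊤ : Subgroup (BS m n)).lowerCentralSeries b) :=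
        QuotientGroup.eq.mp (h1.trans hq)
      rw [Subgroup.mem_subgroupOf] at h2
      have h3 : x = ((Quotient.out q : (⊤ : Subgroup (BS m n)).lowerCentralSeries b) : BS m n) *
          (((Quotient.out q : (⊤ : Subgroup (BS m n)).lowerCentralSeries b) : BS m n)⁻¹ * x) := by group
      rw [h3]
      exact Subgroup.mul_mem_sup (Subgroup.subset_closure ⟨q, rfl⟩) h2
    · -- torsion
      rintro _ ⟨q, rfl⟩ s _
      set y := (Quotient.out q : (⊤ : Subgroup (BS m n)).lowerCentralSeries b) with hy
      obtain ⟨k, hk, hq1⟩ := isOfFinOrder_iff_pow_eq_one.mp (isOfFinOrder_of_finite q)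
      refine ⟨k, hk, ?_⟩
      have h1 : (QuotientGroup.mk (y ^ k) : F) = 1 := by
        have hmk : (QuotientGroup.mk (y ^ k) : F) = (QuotientGroup.mk y : F) ^ k := by
          rw [← QuotientGroup.mk'_apply, ← QuotientGroup.mk'_apply, map_pow]
        rw [hmk, QuotientGroup.out_eq' q]
        exact hq1
      have h2 : y ^ k ∈
          ((⊤ : Subgroup (BS m n)).lowerCentralSeries (b + 1)).subgroupOf ((⊤ : Subgroup (BS m n)).lowerCentralSeries b) :=
        (QuotientGroup.eq_one_iff _).mp h1
      rw [Subgroup.mem_subgroupOf] at h2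
      have h2' : ((y : BS m n)) ^ k ∈ (⊤ : Subgroup (BS m n)).lowerCentralSeries (b + 1) := by
        rw [← SubmonoidClass.coe_pow]
        exact h2
      exact comm_pow_mem y.2 s h2'

theorem stmt3 (m n : ℤ) (hm : 0 < m) (hmn : m ≤ |n|) (c : ℕ) (hc : 2 ≤ c) :
    Finite (((⊤ : Subgroup (BS m n)).lowerCentralSeries (c - 1)) ⧸
      (((⊤ : Subgroup (BS m n)).lowerCentralSeries c).subgroupOf ((⊤ : Subgroup (BS m n)).lowerCentralSeries (c - 1)))) := by
  obtain ⟨b, rfl⟩ : ∃ b, c = b + 1 := ⟨c - 1, by omega⟩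
  simpa using aux_main m n hm b (by omega)
end

section
/- Let G be a finitely generated group. Then the intersection over all prime numbers p of the subgroups (Np)_ω is contained in γ_ω(G); that is, ⋂_{p prime} (Np)_ω ≤ γ_ω(G). -/
open scoped commutatorElement
open scoped IsMulCommutative

section Util
variable {G : Type*} [Group G] {H : Type*} [Group H]

lemma lcs_succ' (n : ℕ) :
    (⊤ : Subgroup G).lowerCentralSeries (n + 1) = ⁅(⊤ : Subgroup G).lowerCentralSeries n, (⊤ : Subgroup G)⁆ := rfl

lemma lcs_map_surjective (f : G →* H) (hf : Function.Surjective f) (n : ℕ) :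
    Subgroup.map f ((⊤ : Subgroup G).lowerCentralSeries n) = (⊤ : Subgroup H).lowerCentralSeries n := by
  induction n with
  | zero => simpa using Subgroup.map_top_of_surjective f hf
  | succ n ih =>
    rw [lcs_succ', lcs_succ', ← ih, Subgroup.map_commutator,
      Subgroup.map_top_of_surjective f hf]

lemma mem_center_of_gen {S : Set G} (hS : Subgroup.closure S = ⊤) {x : G}
    (h : ∀ s ∈ S, x * s = s * x) : x ∈ Subgroup.center G := by
  rw [← Subgroup.centralizer_univ]
  have : Subgroup.closure S ≤ Subgroup.centralizer {x} := by
    rw [Subgroup.closure_le]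
    intro s hs
    exact Subgroup.mem_centralizer_iff.mpr (by simpa using (h s hs))
  rw [hS] at this
  intro y hy
  exact (Subgroup.mem_centralizer_iff.mp (this (Subgroup.mem_top y)) x rfl).symm

lemma map_center_le (f : G →* H) (hf : Function.Surjective f) :
    Subgroup.map f (Subgroup.center G) ≤ Subgroup.center H := by
  rintro _ ⟨z, hz, rfl⟩
  rw [Subgroup.mem_center_iff]
  intro h
  obtain ⟨g, rfl⟩ := hf h
  rw [← map_mul, ← map_mul, (Subgroup.mem_center_iff.mp hz g)]

lemma normal_of_le_center {N : Subgroup G} (h : N ≤ Subgroup.center G) : N.Normal := by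
  constructor
  intro n hn g
  have : g * n = n * g := (Subgroup.mem_center_iff.mp (h hn) g)
  rw [this, mul_assoc, mul_inv_cancel, mul_one]
  exact hn

/-- extension of f.g. by f.g. is f.g. -/
lemma fg_of_normal_quotient (N : Subgroup G) [N.Normal] (h1 : N.FG)
    (h2 : Group.FG (G ⧸ N)) : Group.FG G := by
  classical
  obtain ⟨S, hS⟩ := h1
  obtain ⟨T, hTQ, hTfin⟩ := (Group.fg_iff).mp h2
  have : ∀ t : T, ∃ g : G, QuotientGroup.mk g = (t : G ⧸ N) := fun t => QuotientGroup.mk_surjective (t : G ⧸ N)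
  choose lift hlift using this
  haveI : Finite T := hTfin.to_subtype
  set T' : Set G := Set.range lift with hT'
  have hT'fin : T'.Finite := Set.finite_range _
  refine Group.fg_iff.mpr ⟨(S : Set G) ∪ T', ?_, (S.finite_toSet.union hT'fin)⟩
  rw [eq_top_iff]
  intro g _
  have hg : (QuotientGroup.mk g : G ⧸ N) ∈ Subgroup.closure T := by rw [hTQ]; trivial
  have hmap : (QuotientGroup.mk g : G ⧸ N) ∈
      Subgroup.map (QuotientGroup.mk' N) (Subgroup.closure T') := by
    rw [MonoidHom.map_closure]
    refine Subgroup.closure_mono ?_ hg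
    rintro t ht
    exact ⟨lift ⟨t, ht⟩, ⟨⟨t, ht⟩, rfl⟩, hlift ⟨t, ht⟩⟩
  obtain ⟨h, hh, hgh⟩ := hmap
  have : g * h⁻¹ ∈ N := by
    have : (QuotientGroup.mk (g * h⁻¹) : G ⧸ N) = 1 := by
      have : (QuotientGroup.mk h : G ⧸ N) = QuotientGroup.mk g := hgh
      simp [QuotientGroup.mk_mul, ← this]
    exact (QuotientGroup.eq_one_iff _).mp this
  have hgN : g * h⁻¹ ∈ Subgroup.closure ((S : Set G) ∪ T') := by
    rw [← hS] at this
    exact Subgroup.closure_mono Set.subset_union_left this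
  have hhT : h ∈ Subgroup.closure ((S : Set G) ∪ T') :=
    Subgroup.closure_mono Set.subset_union_right hh
  simpa using Subgroup.mul_mem _ hgN hhT
end Util


section Hall
variable {G : Type*} [Group G]

/-- iterated commutator sets of a generating set -/
def commSets (S : Set G) : ℕ → Set G
  | 0 => S
  | n + 1 => {x | ∃ t ∈ commSets S n, ∃ s ∈ S, x = ⁅t, s⁆}

lemma commSets_finite {S : Set G} (hS : S.Finite) : ∀ n, (commSets S n).Finite
  | 0 => hS
  | n + 1 => by
    have h : commSets S (n + 1) ⊆ (fun p : G × G => ⁅p.1, p.2⁆) '' ((commSets S n) ×ˢ S) := by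
      rintro x ⟨t, ht, s, hs, rfl⟩
      exact ⟨(t, s), ⟨ht, hs⟩, rfl⟩
    exact (((commSets_finite hS n).prod hS).image _).subset h

lemma commSets_le_lcs (S : Set G) : ∀ n, commSets S n ⊆ (⊤ : Subgroup G).lowerCentralSeries n
  | 0 => fun x _ => Subgroup.mem_top x
  | n + 1 => by
    rintro x ⟨t, ht, s, hs, rfl⟩
    rw [lowerCentralSeries_succ]
    exact Subgroup.subset_closure ⟨t, commSets_le_lcs S n ht, s, Subgroup.mem_top s,
      by group⟩

lemma hall_lcs_eq {S : Set G} (hS : Subgroup.closure S = ⊤) (n : ℕ) :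
    (⊤ : Subgroup G).lowerCentralSeries n
      = Subgroup.closure (commSets S n) ⊔ (⊤ : Subgroup G).lowerCentralSeries (n + 1) := by
  induction n with
  | zero => simp [commSets, hS]
  | succ n ih =>
    refine le_antisymm ?_ (sup_le ((Subgroup.closure_le _).mpr (commSets_le_lcs S (n+1)))
      (lowerCentralSeries_antitone _ (by omega)))
    set L := (⊤ : Subgroup G).lowerCentralSeries
    haveI : (L (n+2)).Normal := Subgroup.lowerCentralSeries_normal _ (n+2)
    set Q := G ⧸ L (n + 2)
    set π : G →* Q := QuotientGroup.mk' (L (n + 2)) with hπdef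
    have hπ : Function.Surjective π := QuotientGroup.mk'_surjective _
    have hkerπ : π.ker = L (n + 2) := QuotientGroup.ker_mk' _
    -- the image of L (n+1) is central in Q
    have hcent : Subgroup.map π (L (n + 1)) ≤ Subgroup.center Q := by
      rw [← Subgroup.centralizer_univ, ← Subgroup.coe_top,
        ← Subgroup.commutator_eq_bot_iff_le_centralizer]
      have : (⊤ : Subgroup Q) = Subgroup.map π ⊤ := (Subgroup.map_top_of_surjective π hπ).symm
      rw [this, ← Subgroup.map_commutator]
      rw [Subgroup.map_eq_bot_iff, hkerπ]
      exact le_of_eq rfl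
    set D := Subgroup.closure (π '' commSets S (n + 1)) with hDdef
    have hDle : D ≤ Subgroup.map π (L (n + 1)) := by
      rw [Subgroup.closure_le]
      rintro x ⟨t, ht, rfl⟩
      exact Subgroup.mem_map_of_mem π (commSets_le_lcs S (n+1) ht)
    have hDc : D ≤ Subgroup.center Q := hDle.trans hcent
    haveI hDnormal : D.Normal := normal_of_le_center hDc
    set ρ : Q →* Q ⧸ D := QuotientGroup.mk' D
    have hρ : Function.Surjective ρ := QuotientGroup.mk'_surjective _
    set f : G →* Q ⧸ D := ρ.comp π with hfdef
    have hf : Function.Surjective f := hρ.comp hπ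
    -- the image of L n in Q ⧸ D is central
    have hLn : Subgroup.map f (L n) ≤ Subgroup.center (Q ⧸ D) := by
      have h1 : Subgroup.map f (L n)
          = Subgroup.closure (f '' commSets S n) ⊔ Subgroup.map f (L (n + 1)) := by
        rw [show L n = Subgroup.closure (commSets S n) ⊔ L (n+1) from ih,
          Subgroup.map_sup, MonoidHom.map_closure]
      rw [h1]
      refine sup_le ?_ ?_
      · rw [Subgroup.closure_le]
        rintro x ⟨t, ht, rfl⟩
        have hgen : Subgroup.closure (f '' S) = ⊤ := by
          rw [← MonoidHom.map_closure, hS, Subgroup.map_top_of_surjective f hf]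
        refine mem_center_of_gen hgen ?_
        rintro _ ⟨s, hs, rfl⟩
        have h0 : f ⁅t, s⁆ = 1 := by
          have hmem : ⁅t, s⁆ ∈ commSets S (n + 1) := ⟨t, ht, s, hs, rfl⟩
          have hD : π ⁅t, s⁆ ∈ D := Subgroup.subset_closure ⟨⁅t, s⁆, hmem, rfl⟩
          show ρ (π ⁅t, s⁆) = 1
          rw [← MonoidHom.mem_ker, QuotientGroup.ker_mk']
          exact hD
        have hc : ⁅f t, f s⁆ = 1 := by rw [← map_commutatorElement f t s]; exact h0
        exact commutatorElement_eq_one_iff_mul_comm.mp hc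
      · have : Subgroup.map f (L (n+1)) = Subgroup.map ρ (Subgroup.map π (L (n+1))) := by
          rw [Subgroup.map_map]
        rw [this]
        exact le_trans (Subgroup.map_mono hcent) (map_center_le ρ hρ)
    -- hence image of L (n+1) in Q ⧸ D is trivial
    have hMap : Subgroup.map f (L (n + 1)) = ⊥ := by
      have : Subgroup.map f (L (n + 1)) = ⁅Subgroup.map f (L n), (⊤ : Subgroup (Q ⧸ D))⁆ := by
        rw [show L (n+1) = ⁅L n, (⊤ : Subgroup G)⁆ from rfl, Subgroup.map_commutator,
          Subgroup.map_top_of_surjective f hf]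
      rw [this, Subgroup.commutator_eq_bot_iff_le_centralizer]
      rw [Subgroup.coe_top, Subgroup.centralizer_univ]
      exact hLn
    have hker : L (n + 1) ≤ f.ker := (Subgroup.map_eq_bot_iff _).mp hMap
    have hkerf : f.ker = Subgroup.comap π D := by
      rw [hfdef, ← MonoidHom.comap_ker, QuotientGroup.ker_mk']
    rw [hkerf] at hker
    have : Subgroup.comap π D = Subgroup.closure (commSets S (n+1)) ⊔ L (n + 2) := by
      rw [hDdef, ← MonoidHom.map_closure, Subgroup.comap_map_eq, hkerπ]
    rwa [this] at hker

/-- all terms of the lower central series of a f.g. nilpotent group are f.g. -/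
lemma lcs_fg {G : Type*} [Group G] [Group.FG G] :
    ∀ (m n : ℕ), (⊤ : Subgroup G).lowerCentralSeries (n + m) = ⊥ → ((⊤ : Subgroup G).lowerCentralSeries n).FG := by
  intro m
  induction m with
  | zero =>
    intro n h
    simp only [Nat.add_zero] at h
    rw [h]; exact ⟨∅, by simp⟩
  | succ m ih =>
    intro n h
    classical
    obtain ⟨S, hSgen, hSfin⟩ := Group.fg_iff.mp ‹Group.FG G›
    have h' : (⊤ : Subgroup G).lowerCentralSeries ((n + 1) + m) = ⊥ := by rw [show (n+1)+m = n+(m+1) by omega]; exact h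
    obtain ⟨T, hT⟩ := ih (n + 1) h'
    rw [hall_lcs_eq hSgen n, ← hT]
    have hfin := commSets_finite hSfin n
    refine ⟨hfin.toFinset ∪ T, ?_⟩
    rw [Finset.coe_union, Subgroup.closure_union, Set.Finite.coe_toFinset]
end Hall

section Abelian

/-- Subgroups of f.g. abelian groups are f.g. -/
lemma comm_subgroup_fg {A : Type*} [CommGroup A] [Group.FG A] (K : Subgroup A) : K.FG := by
  haveI : Module.Finite ℤ (Additive A) :=
    Module.Finite.iff_addGroup_fg.mpr (AddGroup.fg_of_group_fg (G := A))
  haveI : IsNoetherian ℤ (Additive A) := isNoetherian_of_isNoetherianRing_of_finite ℤ _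
  rw [Subgroup.fg_iff_add_fg]
  have h := IsNoetherian.noetherian (AddSubgroup.toIntSubmodule (K.toAddSubgroup))
  rw [Submodule.fg_iff_addSubgroup_fg, AddSubgroup.toIntSubmodule_toAddSubgroup] at h
  exact h

/-- A subgroup contained in a f.g. central subgroup is f.g. -/
lemma fg_of_le_fg_of_comm {M : Type*} [Group M] {Z B : Subgroup M}
    [IsMulCommutative Z] (hZfg : Z.FG) (hB : B ≤ Z) : B.FG := by
  haveI : Group.FG Z := (Group.fg_iff_subgroup_fg Z).mpr hZfg
  have h : (B.subgroupOf Z).FG := comm_subgroup_fg _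
  haveI : Group.FG (B.subgroupOf Z) := (Group.fg_iff_subgroup_fg _).mpr h
  have e : (B.subgroupOf Z) ≃* B := Subgroup.subgroupOfEquivOfLe hB
  rw [← Group.fg_iff_subgroup_fg]
  exact Group.fg_of_surjective (G := B.subgroupOf Z) (f := e.toMonoidHom) e.surjective

end Abelian
section CenterFG

universe u

lemma center_fg : ∀ (c : ℕ) {M : Type u} [Group M] [Group.FG M],
    (⊤ : Subgroup M).lowerCentralSeries c = ⊥ → (Subgroup.center M).FG := by
  intro c
  induction c with
  | zero =>
    intro M _ _ h
    simp only [lowerCentralSeries_zero] at h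
    haveI : Subsingleton M := by
      constructor
      intro a b
      have ha : a ∈ (⊥ : Subgroup M) := h ▸ Subgroup.mem_top a
      have hb : b ∈ (⊥ : Subgroup M) := h ▸ Subgroup.mem_top b
      rw [Subgroup.mem_bot] at ha hb
      rw [ha, hb]
    haveI : Finite M := Finite.of_subsingleton
    exact (Group.fg_iff_subgroup_fg _).mp inferInstance
  | succ c ih =>
    intro M _ _ h
    set A := (⊤ : Subgroup M).lowerCentralSeries c with hAdef
    have hA_fg : A.FG := lcs_fg 1 c (by simpa using h)
    have hAc : A ≤ Subgroup.center M := by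
      rw [← Subgroup.centralizer_univ, ← Subgroup.coe_top,
        ← Subgroup.commutator_eq_bot_iff_le_centralizer]
      exact h
    set π := QuotientGroup.mk' A with hπdef
    have hπs : Function.Surjective π := QuotientGroup.mk'_surjective A
    have hq : (⊤ : Subgroup (M ⧸ A)).lowerCentralSeries c = ⊥ := by
      rw [← lcs_map_surjective π hπs c, Subgroup.map_eq_bot_iff, QuotientGroup.ker_mk']
    have hZq : (Subgroup.center (M ⧸ A)).FG := ih hq
    set Z := Subgroup.center M with hZdef
    have hNZ : (A.subgroupOf Z).FG := by
      have e := Subgroup.subgroupOfEquivOfLe hAc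
      haveI : Group.FG A := (Group.fg_iff_subgroup_fg A).mpr hA_fg
      rw [← Group.fg_iff_subgroup_fg]
      exact Group.fg_of_surjective (f := e.symm.toMonoidHom) e.symm.surjective
    set φ : Z →* M ⧸ A := π.comp Z.subtype with hφdef
    have hkerφ : φ.ker = A.subgroupOf Z := by
      rw [hφdef, ← MonoidHom.comap_ker, QuotientGroup.ker_mk']
      rfl
    have hrange : φ.range ≤ Subgroup.center (M ⧸ A) := by
      rintro _ ⟨z, rfl⟩
      exact map_center_le π hπs ⟨(z : M), z.2, rfl⟩
    have hrange_fg : φ.range.FG := fg_of_le_fg_of_comm hZq hrange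
    have e2 : (Z ⧸ φ.ker) ≃* φ.range := QuotientGroup.quotientKerEquivRange φ
    haveI : Group.FG φ.range := (Group.fg_iff_subgroup_fg _).mpr hrange_fg
    have hQfg : Group.FG (Z ⧸ φ.ker) :=
      Group.fg_of_surjective (f := e2.symm.toMonoidHom) e2.symm.surjective
    have : Group.FG Z := fg_of_normal_quotient φ.ker (hkerφ ▸ hNZ) hQfg
    exact (Group.fg_iff_subgroup_fg Z).mp this

end CenterFG
section InfiniteCenter

universe u

lemma finite_of_finite_fibers {α : Type*} {β : Type*} (f : α → β) [Finite β]
    (h : ∀ b, Finite {a // f a = b}) : Finite α :=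
  Finite.of_equiv _ (Equiv.sigmaFiberEquiv f)

lemma infinite_center : ∀ (c : ℕ) {M : Type u} [Group M] [Group.FG M],
    (⊤ : Subgroup M).lowerCentralSeries c = ⊥ → Infinite M → Infinite (Subgroup.center M) := by
  intro c
  induction c with
  | zero =>
    intro M _ _ h hM
    exfalso
    haveI : Subsingleton M := by
      constructor
      intro a b
      have ha : a ∈ (⊥ : Subgroup M) := by
        rw [← h]; exact Subgroup.mem_top a
      have hb : b ∈ (⊥ : Subgroup M) := by
        rw [← h]; exact Subgroup.mem_top b
      rw [Subgroup.mem_bot] at ha hb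
      rw [ha, hb]
    exact (not_subsingleton M) inferInstance
  | succ c ih =>
    intro M _ _ h hM
    by_contra hfin
    rw [not_infinite_iff_finite] at hfin
    set Z := Subgroup.center M with hZdef
    haveI : Finite Z := hfin
    have hAc : (⊤ : Subgroup M).lowerCentralSeries c ≤ Z := by
      rw [hZdef, ← Subgroup.centralizer_univ, ← Subgroup.coe_top,
        ← Subgroup.commutator_eq_bot_iff_le_centralizer]
      exact h
    set π := QuotientGroup.mk' Z with hπdef
    have hπs : Function.Surjective π := QuotientGroup.mk'_surjective Z
    have hq : (⊤ : Subgroup (M ⧸ Z)).lowerCentralSeries c = ⊥ := by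
      rw [← lcs_map_surjective π hπs c, Subgroup.map_eq_bot_iff, QuotientGroup.ker_mk']
      exact hAc
    have hMq : Infinite (M ⧸ Z) := by
      by_contra hf
      rw [not_infinite_iff_finite] at hf
      haveI : Finite ((M ⧸ Z) × Z) := inferInstance
      haveI : Finite M := Finite.of_equiv _ (Subgroup.groupEquivQuotientProdSubgroup (s := Z)).symm
      exact hM.not_finite ‹Finite M›
    have hZq : Infinite (Subgroup.center (M ⧸ Z)) := ih hq hMq
    set Z₂ := Subgroup.comap π (Subgroup.center (M ⧸ Z)) with hZ₂def
    have hZ₂inf : Infinite Z₂ := by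
      refine Infinite.of_surjective
        (fun z : Z₂ => (⟨π (z : M), z.2⟩ : Subgroup.center (M ⧸ Z))) ?_
      rintro ⟨y, hy⟩
      obtain ⟨m, rfl⟩ := hπs y
      exact ⟨⟨m, hy⟩, rfl⟩
    -- now bound Z₂
    classical
    obtain ⟨F, hF⟩ : ∃ F : Finset M, Subgroup.closure (F : Set M) = ⊤ := by
      have hfg := ‹Group.FG M›
      rw [Group.fg_def] at hfg
      exact hfg
    have hcomm : ∀ (z : Z₂) (s : M), ⁅(z : M), s⁆ ∈ Z := by
      intro z s
      have : π ⁅(z : M), s⁆ = 1 := by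
        rw [map_commutatorElement]
        have hz2 : π (z : M) ∈ Subgroup.center (M ⧸ Z) := z.2
        exact commutatorElement_eq_one_iff_mul_comm.mpr
          ((Subgroup.mem_center_iff.mp hz2 (π s)).symm)
      rwa [← MonoidHom.mem_ker, QuotientGroup.ker_mk'] at this
    set ff : Z₂ → ({x // x ∈ F} → Z) := fun z s => ⟨⁅(z : M), (s : M)⁆, hcomm z s⟩ with hffdef
    have key : ∀ z w : Z₂, ff z = ff w → ((w : M)⁻¹ * (z : M)) ∈ Z := by
      intro z w hzw
      refine mem_center_of_gen hF ?_
      intro s hs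
      have h1 : ⁅(z : M), s⁆ = ⁅(w : M), s⁆ := by
        have := congrFun hzw ⟨s, hs⟩
        exact Subtype.ext_iff.mp this
      have h2 : (z : M) * s * (z : M)⁻¹ = (w : M) * s * (w : M)⁻¹ := by
        have := congrArg (fun u => u * s) h1
        simpa [commutatorElement_def, mul_assoc] using this
      calc ((w : M)⁻¹ * (z : M)) * s
          = (w : M)⁻¹ * ((z : M) * s * (z : M)⁻¹) * (z : M) := by group
        _ = (w : M)⁻¹ * ((w : M) * s * (w : M)⁻¹) * (z : M) := by rw [h2]
        _ = s * ((w : M)⁻¹ * (z : M)) := by group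
    haveI : Finite Z₂ := by
      refine finite_of_finite_fibers ff ?_
      intro b
      rcases isEmpty_or_nonempty {a // ff a = b} with he | hne
      · infer_instance
      · obtain ⟨⟨a₀, ha₀⟩⟩ := hne
        refine Finite.of_injective
          (fun a : {a // ff a = b} => (⟨((a₀ : M))⁻¹ * ((a.1 : M)), ?_⟩ : Z)) ?_
        · exact key a.1 a₀ (by rw [a.2, ha₀])
        · intro a a' haa
          have := Subtype.ext_iff.mp haa
          simp only [mul_right_inj] at this
          exact Subtype.ext (Subtype.ext (by exact this))
    exact hZ₂inf.not_finite ‹Finite Z₂›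

end InfiniteCenter
section Monolith

universe u

/-- A f.g. nilpotent group with a "monolith" element is finite. -/
lemma monolith_finite {M : Type u} [Group M] [Group.FG M] {c : ℕ}
    (h : (⊤ : Subgroup M).lowerCentralSeries c = ⊥) {a : M} (ha : a ≠ 1)
    (hmono : ∀ N : Subgroup M, N.Normal → N ≠ ⊥ → a ∈ N) : Finite M := by
  set Z := Subgroup.center M with hZdef
  have hZtor : ∀ z : Z, IsOfFinOrder z := by
    intro z
    by_contra hz
    have hzM : ¬ IsOfFinOrder (z : M) := by
      intro hfin
      refine hz ?_
      rw [← orderOf_pos_iff] at hfin ⊢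
      rwa [Subgroup.orderOf_coe] at hfin
    have hinj : Function.Injective fun n : ℤ => (z : M) ^ n :=
      injective_zpow_iff_not_isOfFinOrder.mpr hzM
    have hmem : ∀ m : ℕ, 0 < m → ∃ k : ℤ, ((z : M) ^ (m : ℤ)) ^ k = a := by
      intro m hm
      have hle : Subgroup.zpowers ((z : M) ^ (m : ℤ)) ≤ Z :=
        Subgroup.zpowers_le.mpr (Subgroup.zpow_mem Z z.2 (m : ℤ))
      have hN : (Subgroup.zpowers ((z : M) ^ (m : ℤ))).Normal := normal_of_le_center hle
      have hne : Subgroup.zpowers ((z : M) ^ (m : ℤ)) ≠ ⊥ := by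
        rw [Ne, Subgroup.zpowers_eq_bot]
        intro heq
        have : (z : M) ^ (m : ℤ) = (z : M) ^ (0 : ℤ) := by simpa using heq
        have := hinj this
        omega
      have := hmono _ hN hne
      rwa [Subgroup.mem_zpowers_iff] at this
    obtain ⟨k1, hk1⟩ := hmem 1 one_pos
    rw [show ((1 : ℕ) : ℤ) = 1 from rfl, zpow_one] at hk1
    have hk1ne : k1 ≠ 0 := by
      intro h0
      rw [h0] at hk1
      exact ha (by simpa using hk1.symm)
    obtain ⟨k2, hk2⟩ := hmem (k1.natAbs + 1) (by omega)
    rw [← zpow_mul] at hk2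
    have heq : ((k1.natAbs + 1 : ℕ) : ℤ) * k2 = k1 := by
      apply hinj
      show (z : M) ^ _ = (z : M) ^ k1
      rw [hk2, hk1]
    have hdvd : ((k1.natAbs + 1 : ℕ) : ℤ) ∣ k1 := ⟨k2, heq.symm⟩
    have := Int.natAbs_dvd_natAbs.mpr hdvd
    simp only [Int.natAbs_natCast] at this
    have := Nat.le_of_dvd (by omega) this
    omega
  have hZfg : Z.FG := center_fg c h
  haveI : Group.FG Z := (Group.fg_iff_subgroup_fg Z).mpr hZfg
  haveI hZfin : Finite Z := CommGroup.finite_of_fg_torsion (G := ↥Z) hZtor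
  by_contra hinf
  rw [not_finite_iff_infinite] at hinf
  exact (infinite_center c h hinf).not_finite hZfin

/-- every f.g. nilpotent group is residually finite -/
lemma exists_finite_quotient {H : Type u} [Group H] [Group.FG H] {c : ℕ}
    (h : (⊤ : Subgroup H).lowerCentralSeries c = ⊥) {x : H} (hx : x ≠ 1) :
    ∃ N : Subgroup H, N.Normal ∧ x ∉ N ∧ Finite (H ⧸ N) := by
  classical
  set s : Set (Subgroup H) := {N | N.Normal ∧ x ∉ N} with hsdef
  have hbot : (⊥ : Subgroup H) ∈ s := ⟨inferInstance, by simpa using hx⟩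
  have hchain : ∀ ch ⊆ s, IsChain (· ≤ ·) ch → ∀ P ∈ ch, ∃ ub ∈ s, ∀ z ∈ ch, z ≤ ub := by
    intro ch hchs hch P hP
    haveI hne : Nonempty ch := ⟨⟨P, hP⟩⟩
    have hdir : Directed (· ≤ ·) (fun N : ch => (N : Subgroup H)) := by
      intro A B
      rcases hch.total A.2 B.2 with hab | hba
      · exact ⟨B, hab, le_rfl⟩
      · exact ⟨A, le_rfl, hba⟩
    set U := ⨆ N : ch, (N : Subgroup H) with hUdef
    have hmemU : ∀ {y : H}, y ∈ U ↔ ∃ N : ch, y ∈ (N : Subgroup H) := by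
      intro y
      rw [hUdef, Subgroup.mem_iSup_of_directed hdir]
    refine ⟨U, ⟨?_, ?_⟩, ?_⟩
    · constructor
      intro n hn g
      obtain ⟨A, hA⟩ := hmemU.mp hn
      have : g * n * g⁻¹ ∈ (A : Subgroup H) := (hchs A.2).1.conj_mem n hA g
      exact hmemU.mpr ⟨A, this⟩
    · intro hxU
      obtain ⟨A, hA⟩ := hmemU.mp hxU
      exact (hchs A.2).2 hA
    · intro A hA
      exact le_iSup (fun N : ch => (N : Subgroup H)) (⟨A, hA⟩ : ch)
  obtain ⟨N, -, hNmax⟩ := zorn_le_nonempty₀ s hchain ⊥ hbot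
  obtain ⟨hNnormal, hxN⟩ := hNmax.1
  haveI := hNnormal
  refine ⟨N, hNnormal, hxN, ?_⟩
  set M := H ⧸ N
  set a : M := QuotientGroup.mk x with hadef
  have ha : a ≠ 1 := by
    rw [hadef, Ne, QuotientGroup.eq_one_iff]
    exact hxN
  have hlcs : (⊤ : Subgroup M).lowerCentralSeries c = ⊥ := by
    rw [← lcs_map_surjective (QuotientGroup.mk' N) (QuotientGroup.mk'_surjective N) c,
      Subgroup.map_eq_bot_iff, h]
    exact bot_le
  refine monolith_finite hlcs ha ?_
  intro P hP hPbot
  set P' := Subgroup.comap (QuotientGroup.mk' N) P with hP'def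
  haveI := hP
  have hP'normal : P'.Normal := hP.comap _
  have hNP' : N ≤ P' := by
    intro n hn
    rw [hP'def, Subgroup.mem_comap]
    have : (QuotientGroup.mk' N) n = 1 := by
      rw [← MonoidHom.mem_ker, QuotientGroup.ker_mk']
      exact hn
    rw [this]
    exact P.one_mem
  have hxP' : x ∈ P' := by
    by_contra hxP'
    have hP's : P' ∈ s := ⟨hP'normal, hxP'⟩
    have hle : P' ≤ N := hNmax.2 hP's hNP'
    refine hPbot ?_
    rw [eq_bot_iff]
    intro y hy
    obtain ⟨w, rfl⟩ := QuotientGroup.mk'_surjective N y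
    have hw : w ∈ P' := by rwa [hP'def, Subgroup.mem_comap]
    have hwN : w ∈ N := hle hw
    rw [Subgroup.mem_bot]
    exact (QuotientGroup.eq_one_iff w).mpr hwN
  rwa [hP'def, Subgroup.mem_comap] at hxP'

end Monolith
section FiniteNilpotent

universe u

lemma finite_nilpotent_sep {F : Type u} [Group F] [Finite F] (hnil : Group.IsNilpotent F)
    {y : F} (hy : y ≠ 1) :
    ∃ p : ℕ, p.Prime ∧ ∃ P : Subgroup F, P.Normal ∧ (∃ k : ℕ, P.index = p ^ k) ∧ y ∉ P := by
  classical
  have h2 : orderOf y ≠ 1 := by simpa [orderOf_eq_one_iff] using hy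
  set q := (orderOf y).minFac with hqdef
  have hq : q.Prime := Nat.minFac_prime h2
  have h5 := (isNilpotent_of_finite_tfae (G := F)).out 0 4
  obtain ⟨e⟩ := h5.mp hnil
  have hqmem : q ∈ (Nat.card F).primeFactors := by
    rw [Nat.mem_primeFactors]
    exact ⟨hq, dvd_trans (Nat.minFac_dvd _) (orderOf_dvd_natCard y), Nat.card_pos.ne'⟩
  set pq : (Nat.card F).primeFactors := ⟨q, hqmem⟩ with hpqdef
  set C : (Nat.card F).primeFactors → Type u := fun p => ∀ P : Sylow (p : ℕ) F, (P : Subgroup F)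
    with hCdef
  set φ : F →* C pq := (Pi.evalMonoidHom C pq).comp e.symm.toMonoidHom with hφdef
  have hφs : Function.Surjective φ := by
    intro w
    refine ⟨e (Function.update 1 pq w), ?_⟩
    rw [hφdef]
    simp only [MonoidHom.coe_comp, Function.comp_apply, MulEquiv.coe_toMonoidHom,
      MulEquiv.symm_apply_apply]
    exact Function.update_self pq w 1
  haveI : Fact q.Prime := ⟨hq⟩
  haveI : Finite (Sylow ((pq : ℕ)) F) :=
    Finite.of_injective (fun P : Sylow ((pq : ℕ)) F => (P : Set F)) SetLike.coe_injective
  letI : Fintype (Sylow ((pq : ℕ)) F) := Fintype.ofFinite _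
  refine ⟨q, hq, φ.ker, inferInstance, ?_, ?_⟩
  · rw [Subgroup.index_ker]
    have hrange : φ.range = ⊤ := MonoidHom.range_eq_top.mpr hφs
    rw [hrange]
    have hcards : ∀ P : Sylow (pq : ℕ) F, ∃ n : ℕ, Nat.card (P : Subgroup F) = q ^ n := by
      intro P
      haveI : Fact (Nat.Prime (pq : ℕ)) := ⟨hq⟩
      exact (IsPGroup.iff_card).mp P.isPGroup'
    choose n hn using hcards
    refine ⟨∑ P : Sylow (pq : ℕ) F, n P, ?_⟩
    rw [show Nat.card (⊤ : Subgroup (C pq)) = Nat.card (C pq) from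
      Nat.card_congr Subgroup.topEquiv.toEquiv]
    rw [hCdef]
    rw [Nat.card_pi]
    rw [Finset.prod_congr rfl (fun P _ => hn P), Finset.prod_pow_eq_pow_sum]
  · intro hyk
    set v := e.symm y with hvdef
    have hvq : v pq = 1 := hyk
    set t := ∏ p ∈ Finset.univ.erase pq, Nat.card (C p) with htdef
    have hvt : v ^ t = 1 := by
      funext p
      show (v p) ^ t = 1
      by_cases hp : p = pq
      · rw [hp, hvq, one_pow]
      · have hdv : Nat.card (C p) ∣ t :=
          Finset.dvd_prod_of_mem _ (Finset.mem_erase.mpr ⟨hp, Finset.mem_univ p⟩)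
        exact orderOf_dvd_iff_pow_eq_one.mp (dvd_trans (orderOf_dvd_natCard (v p)) hdv)
    have hdvd : orderOf v ∣ t := orderOf_dvd_of_pow_eq_one hvt
    have hov : orderOf v = orderOf y := orderOf_injective e.symm.toMonoidHom e.symm.injective y
    have hqt : q ∣ t := dvd_trans (hqdef ▸ Nat.minFac_dvd _) (hov ▸ hdvd)
    obtain ⟨p, hpmem, hpdvd⟩ := (Nat.Prime.prime hq).dvd_finset_prod_iff _ |>.mp hqt
    have hpne : p ≠ pq := (Finset.mem_erase.mp hpmem).1
    -- q divides card (C p), a power of p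
    have : ∃ m : ℕ, Nat.card (C p) = (p : ℕ) ^ m := by
      haveI : Fact (Nat.Prime (p : ℕ)) := ⟨Nat.prime_of_mem_primeFactors p.2⟩
      haveI : Finite (Sylow ((p : ℕ)) F) :=
        Finite.of_injective (fun P : Sylow ((p : ℕ)) F => (P : Set F)) SetLike.coe_injective
      letI : Fintype (Sylow ((p : ℕ)) F) := Fintype.ofFinite _
      have hcards : ∀ P : Sylow (p : ℕ) F, ∃ m : ℕ, Nat.card (P : Subgroup F) = (p : ℕ) ^ m :=
        fun P => (IsPGroup.iff_card).mp P.isPGroup'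
      choose m hm using hcards
      refine ⟨∑ P : Sylow (p : ℕ) F, m P, ?_⟩
      rw [hCdef, Nat.card_pi, Finset.prod_congr rfl (fun P _ => hm P),
        Finset.prod_pow_eq_pow_sum]
    obtain ⟨m, hm⟩ := this
    rw [hm] at hpdvd
    have : q = (p : ℕ) := by
      have hp' : Nat.Prime (p : ℕ) := Nat.prime_of_mem_primeFactors p.2
      have := (Nat.Prime.dvd_of_dvd_pow hq hpdvd)
      exact ((Nat.prime_dvd_prime_iff_eq hq hp').mp this)
    exact hpne (Subtype.ext this.symm)

end FiniteNilpotent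



/-- `(Np)_ω`: the intersection of all normal subgroups of index a power of `p`. -/
def Npomega (G : Type*) [Group G] (p : ℕ) : Subgroup G :=
  sInf {H : Subgroup G | H.Normal ∧ ∃ k : ℕ, H.index = p ^ k}

theorem stmt7 {G : Type*} [Group G] (hG : Group.FG G) :
    (⨅ (p : ℕ) (_ : p.Prime), Npomega G p) ≤ lcsOmega G := by
  haveI := hG
  intro x hx
  rw [lcsOmega, Subgroup.mem_iInf]
  intro c
  by_contra hxc
  set L := (⊤ : Subgroup G).lowerCentralSeries c with hLdef
  haveI : L.Normal := Subgroup.lowerCentralSeries_normal _ c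
  set π : G →* G ⧸ L := QuotientGroup.mk' L with hπdef
  have hπs : Function.Surjective π := QuotientGroup.mk'_surjective L
  set y : G ⧸ L := π x with hydef
  have hy : y ≠ 1 := by
    rw [hydef, hπdef, Ne, QuotientGroup.mk'_apply, QuotientGroup.eq_one_iff]
    exact hxc
  have hlcsH : (⊤ : Subgroup (G ⧸ L)).lowerCentralSeries c = ⊥ := by
    rw [← lcs_map_surjective π hπs c, Subgroup.map_eq_bot_iff, QuotientGroup.ker_mk']
  obtain ⟨N, hNnorm, hyN, hNfin⟩ := exists_finite_quotient hlcsH hy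
  haveI := hNnorm
  haveI := hNfin
  set ρ : (G ⧸ L) →* (G ⧸ L) ⧸ N := QuotientGroup.mk' N with hρdef
  have hρs : Function.Surjective ρ := QuotientGroup.mk'_surjective N
  have hnilF : Group.IsNilpotent ((G ⧸ L) ⧸ N) := by
    rw [nilpotent_iff_lowerCentralSeries]
    refine ⟨c, ?_⟩
    rw [← lcs_map_surjective ρ hρs c, hlcsH]
    exact Subgroup.map_bot ρ
  have hz : ρ y ≠ 1 := by
    rw [hρdef, Ne, QuotientGroup.mk'_apply, QuotientGroup.eq_one_iff]
    exact hyN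
  obtain ⟨p, hp, P, hPnorm, ⟨k, hPidx⟩, hzP⟩ := finite_nilpotent_sep hnilF hz
  haveI := hPnorm
  set P1 := Subgroup.comap ρ P with hP1def
  set P2 := Subgroup.comap π P1 with hP2def
  have hP2norm : P2.Normal := (hPnorm.comap ρ).comap π
  have hidx : P2.index = p ^ k := by
    rw [hP2def, Subgroup.index_comap_of_surjective _ hπs, hP1def,
      Subgroup.index_comap_of_surjective _ hρs, hPidx]
  have hxp : x ∈ Npomega G p := by
    have h1 := (Subgroup.mem_iInf.mp hx) p
    exact (Subgroup.mem_iInf.mp h1) hp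
  rw [Npomega, Subgroup.mem_sInf] at hxp
  have hxP2 : x ∈ P2 := hxp P2 ⟨hP2norm, k, hidx⟩
  rw [hP2def, Subgroup.mem_comap, hP1def, Subgroup.mem_comap] at hxP2
  exact hzP hxP2
end

section
/- Let G = BS(m,n) be the Baumslag–Solitar group with 0 < m ≤ |n| and d = gcd(m,n). Then for all integers k, x, y, the elements [(t^{-k} a^d t^k)^x, a^y] and [(t^{-k} a t^k)^y, (a^d)^x] belong to γ_ω(G). -/
set_option linter.unusedVariables false
set_option linter.unnecessarySimpa false
set_option linter.unusedSectionVars false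

open scoped commutatorElement

namespace BSAux

section Generic
variable {G : Type*} [Group G]

theorem conj_zpow' (g x : G) (r : ℤ) : (g * x * g⁻¹) ^ r = g * x ^ r * g⁻¹ := by
  simpa [MulAut.conj_apply] using (map_zpow (MulAut.conj g) x r).symm

theorem conj_zpow₂ (g x : G) (r : ℤ) : g⁻¹ * x ^ r * g = (g⁻¹ * x * g) ^ r := by
  simpa using (conj_zpow' g⁻¹ x r).symm

theorem conj_comm' (g x y : G) : ⁅g * x * g⁻¹, g * y * g⁻¹⁆ = g * ⁅x, y⁆ * g⁻¹ := by
  simp only [commutatorElement_def]; group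

theorem conj_eq_self {x g : G} (h : Commute x g) : g * x * g⁻¹ = x := by
  rw [← h.eq, mul_assoc, mul_inv_cancel, mul_one]

theorem comm_zpow_left (x y z : G) (hz : ⁅x, y⁆ = z) (hc : ∀ g : G, Commute z g) (r : ℤ) :
    ⁅x ^ r, y⁆ = z ^ r := by
  have hcz : Commute x⁻¹ z := (hc x⁻¹).symm
  have h1 : y * x⁻¹ * y⁻¹ = x⁻¹ * z := by rw [← hz, commutatorElement_def]; group
  have h2 : y * (x ^ r)⁻¹ * y⁻¹ = (x ^ r)⁻¹ * z ^ r := by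
    calc y * (x ^ r)⁻¹ * y⁻¹ = y * x⁻¹ ^ r * y⁻¹ := by rw [inv_zpow]
    _ = (y * x⁻¹ * y⁻¹) ^ r := (conj_zpow' y x⁻¹ r).symm
    _ = (x⁻¹ * z) ^ r := by rw [h1]
    _ = x⁻¹ ^ r * z ^ r := hcz.mul_zpow r
    _ = (x ^ r)⁻¹ * z ^ r := by rw [inv_zpow]
  calc ⁅x ^ r, y⁆ = x ^ r * (y * (x ^ r)⁻¹ * y⁻¹) := by rw [commutatorElement_def]; group
  _ = x ^ r * ((x ^ r)⁻¹ * z ^ r) := by rw [h2]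
  _ = z ^ r := by group

theorem comm_zpow_right (x y z : G) (hz : ⁅x, y⁆ = z) (hc : ∀ g : G, Commute z g) (r : ℤ) :
    ⁅x, y ^ r⁆ = z ^ r := by
  have h1 : x * y * x⁻¹ = z * y := by rw [← hz, commutatorElement_def]; group
  have h2 : x * y ^ r * x⁻¹ = z ^ r * y ^ r := by
    calc x * y ^ r * x⁻¹ = (x * y * x⁻¹) ^ r := (conj_zpow' x y r).symm
    _ = (z * y) ^ r := by rw [h1]
    _ = z ^ r * y ^ r := (hc y).mul_zpow r
  calc ⁅x, y ^ r⁆ = x * y ^ r * x⁻¹ * (y ^ r)⁻¹ := by rw [commutatorElement_def]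
  _ = z ^ r * y ^ r * (y ^ r)⁻¹ := by rw [h2]
  _ = z ^ r := by group

theorem eliminate {Q : Type*} [Group Q] (v : Q) (e1 e2 e3 : ℤ)
    (h1 : v ^ e1 = 1) (h2 : v ^ e2 = 1) (h3 : v ^ e3 = 1)
    (hg : Int.gcd e1 ((Int.gcd e2 e3 : ℕ) : ℤ) = 1) : v = 1 := by
  have hb1 := Int.gcd_eq_gcd_ab e1 ((Int.gcd e2 e3 : ℕ) : ℤ)
  have hb2 := Int.gcd_eq_gcd_ab e2 e3
  rw [hg] at hb1
  have hv : v = v ^ ((1 : ℕ) : ℤ) := by norm_num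
  rw [hv, hb1, hb2]
  rw [zpow_add, zpow_mul, zpow_mul, zpow_add, zpow_mul, zpow_mul, h1, h2, h3]
  simp


theorem div_swap {g F D : ℤ} (hgF : g ∣ F) (hgD : g ∣ D) (hg0 : g ≠ 0) :
    D * (F / g) = F * (D / g) := by
  obtain ⟨F', rfl⟩ := hgF
  obtain ⟨D', rfl⟩ := hgD
  rw [Int.mul_ediv_cancel_left _ hg0, Int.mul_ediv_cancel_left _ hg0]
  ring

end Generic



def FF (q m : ℤ) : ℕ → ℤ
  | 0 => q
  | c + 1 => q * (FF q m c / (Int.gcd (FF q m c) m : ℤ))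

theorem FF_succ (q m : ℤ) (c : ℕ) :
    FF q m (c + 1) = q * (FF q m c / (Int.gcd (FF q m c) m : ℤ)) := rfl

/-- The key arithmetic lemma. -/
theorem NTcore (m D q : ℤ) (p : ℕ) (hp : p.Prime) (ν : ℕ)
    (hq1 : ((p : ℤ)) ^ ν ∣ q) (hq2 : ¬((p : ℤ)) ^ (ν + 1) ∣ q)
    (hm1 : ((p : ℤ)) ^ ν ∣ m) (hD1 : ((p : ℤ)) ^ ν ∣ D) (c : ℕ) :
    ¬((p : ℤ) ∣ (FF q m c / (Int.gcd (FF q m c) D : ℤ))) := by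
  have hppos : ((p : ℤ)) ^ ν ≠ 0 := pow_ne_zero _ (by exact_mod_cast hp.ne_zero)
  have hpp : Prime (p : ℤ) := Nat.prime_iff_prime_int.mp hp
  -- decomposition of q
  obtain ⟨w₀, hw₀⟩ : ((p : ℤ)) ^ ν ∣ q := hq1
  have hpw₀ : ¬(p : ℤ) ∣ w₀ := by
    intro h
    exact hq2 (by rw [hw₀, pow_succ]; exact mul_dvd_mul_left _ h)
  -- invariant
  have INV : ∀ c' : ℕ, ∃ w : ℤ, FF q m c' = ((p : ℤ)) ^ ν * w ∧ ¬(p : ℤ) ∣ w := by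
    intro c'
    induction c' with
    | zero => exact ⟨w₀, hw₀, hpw₀⟩
    | succ c' ih =>
      obtain ⟨w, hw, hpw⟩ := ih
      set F := FF q m c' with hF
      set G₁ : ℤ := (Int.gcd F m : ℤ) with hG₁
      set X : ℤ := F / G₁ with hX
      have hG₁F : G₁ ∣ F := Int.gcd_dvd_left _ _
      have hGX : G₁ * X = F := Int.mul_ediv_cancel' hG₁F
      have hpG : ((p : ℤ)) ^ ν ∣ G₁ := Int.dvd_coe_gcd ⟨w, hw⟩ hm1
      have hpX : ¬(p : ℤ) ∣ X := by
        intro h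
        have h2 : ((p : ℤ)) ^ ν * (p : ℤ) ∣ G₁ * X := mul_dvd_mul hpG h
        rw [hGX, hw] at h2
        exact hpw ((mul_dvd_mul_iff_left hppos).mp h2)
      refine ⟨w₀ * X, ?_, ?_⟩
      · rw [FF_succ, ← hF, ← hG₁, ← hX, hw₀]; ring
      · intro h
        rcases hpp.dvd_mul.mp h with h | h
        · exact hpw₀ h
        · exact hpX h
  -- conclusion
  obtain ⟨w, hw, hpw⟩ := INV c
  intro hS
  set F := FF q m c with hF
  set G₂ : ℤ := (Int.gcd F D : ℤ) with hG₂
  have hG₂F : G₂ ∣ F := Int.gcd_dvd_left _ _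
  have hGS : G₂ * (F / G₂) = F := Int.mul_ediv_cancel' hG₂F
  have hpG : ((p : ℤ)) ^ ν ∣ G₂ := Int.dvd_coe_gcd ⟨w, hw⟩ hD1
  have h2 : ((p : ℤ)) ^ ν * (p : ℤ) ∣ G₂ * (F / G₂) := mul_dvd_mul hpG hS
  rw [hGS, hw] at h2
  exact hpw ((mul_dvd_mul_iff_left hppos).mp h2)


section NT
variable (m n : ℤ) (hm : m ≠ 0) (hn : n ≠ 0) (d : ℕ) (hd : (d : ℤ) = Int.gcd m n)
variable (p : ℕ) (hp : p.Prime)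

theorem natPow_dvd_int {k : ℕ} {z : ℤ} (h : k ∣ z.natAbs) : (k : ℤ) ∣ z :=
  Int.natCast_dvd.mpr h

theorem not_natPow_dvd_int {k : ℕ} {z : ℤ} (h : ¬ k ∣ z.natAbs) : ¬ (k : ℤ) ∣ z := fun hc =>
  h (Int.natCast_dvd.mp hc)

include hp hd hm hn in
theorem sideA (m' : ℤ) (hDm' : (d : ℤ) * m' = m)
    (hpm' : (p : ℤ) ∣ m') (hpn : (p : ℤ) ∣ n) (c : ℕ) :
    ¬ (p : ℤ) ∣ (FF (m - n) m c / (Int.gcd (FF (m - n) m c) (d : ℤ) : ℤ)) := by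
  have hd0 : d ≠ 0 := by
    intro h
    rw [h] at hd
    exact hm (Int.gcd_eq_zero_iff.mp (by exact_mod_cast hd.symm)).1
  have hdm : (d : ℤ) ∣ m := hd ▸ Int.gcd_dvd_left _ _
  have hdn : (d : ℤ) ∣ n := hd ▸ Int.gcd_dvd_right _ _
  set ν := n.natAbs.factorization p with hνdef
  set δ := d.factorization p with hδdef
  have hnA : n.natAbs ≠ 0 := Int.natAbs_ne_zero.mpr hn
  have hν1 : ((p : ℤ)) ^ ν ∣ n := by
    have := natPow_dvd_int (z := n) (Nat.ordProj_dvd n.natAbs p)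
    push_cast at this; exact this
  have hν2 : ¬ ((p : ℤ)) ^ (ν + 1) ∣ n := by
    have := not_natPow_dvd_int (z := n) (Nat.pow_succ_factorization_not_dvd hnA hp)
    push_cast at this; exact this
  have hδ1 : ((p : ℤ)) ^ δ ∣ (d : ℤ) := by
    have := natPow_dvd_int (z := (d : ℤ)) (by simpa using Nat.ordProj_dvd d p)
    push_cast at this; exact this
  have hδ2 : ¬ ((p : ℤ)) ^ (δ + 1) ∣ (d : ℤ) := by
    have := not_natPow_dvd_int (z := (d : ℤ))
      (by simpa using Nat.pow_succ_factorization_not_dvd hd0 hp)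
    push_cast at this; exact this
  have hpδm : ((p : ℤ)) ^ (δ + 1) ∣ m := by
    rw [pow_succ, ← hDm']
    exact mul_dvd_mul hδ1 hpm'
  have hδn : ¬ ((p : ℤ)) ^ (δ + 1) ∣ n := by
    intro h
    exact hδ2 (hd ▸ Int.dvd_coe_gcd hpδm h)
  have hνδ : ν ≤ δ := by
    by_contra hlt
    push_neg at hlt
    exact hδn (dvd_trans (pow_dvd_pow _ hlt) hν1)
  have hδν : δ ≤ ν := by
    by_contra hlt
    push_neg at hlt
    exact hν2 (dvd_trans (pow_dvd_pow _ hlt) (dvd_trans hδ1 hdn))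
  have heq : δ = ν := le_antisymm hδν hνδ
  have hm1 : ((p : ℤ)) ^ ν ∣ m := heq ▸ dvd_trans hδ1 hdm
  have hD1 : ((p : ℤ)) ^ ν ∣ (d : ℤ) := heq ▸ hδ1
  have hq1 : ((p : ℤ)) ^ ν ∣ m - n := dvd_sub hm1 hν1
  have hq2 : ¬ ((p : ℤ)) ^ (ν + 1) ∣ m - n := by
    intro h
    have : ((p : ℤ)) ^ (ν + 1) ∣ n := by
      have := dvd_sub (heq ▸ hpδm) h
      simpa using this
    exact hν2 this
  exact NTcore m (d : ℤ) (m - n) p hp ν hq1 hq2 hm1 hD1 c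

include hp hd hm hn in
theorem sideB (n' : ℤ) (hDn' : (d : ℤ) * n' = n)
    (hpn' : (p : ℤ) ∣ n') (hpm : (p : ℤ) ∣ m) (c : ℕ) :
    ¬ (p : ℤ) ∣ (FF (m - n) m c / (Int.gcd (FF (m - n) m c) (d : ℤ) : ℤ)) := by
  have hd0 : d ≠ 0 := by
    intro h
    rw [h] at hd
    exact hm (Int.gcd_eq_zero_iff.mp (by exact_mod_cast hd.symm)).1
  have hdm : (d : ℤ) ∣ m := hd ▸ Int.gcd_dvd_left _ _
  have hdn : (d : ℤ) ∣ n := hd ▸ Int.gcd_dvd_right _ _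
  set μ := m.natAbs.factorization p with hμdef
  set δ := d.factorization p with hδdef
  have hmA : m.natAbs ≠ 0 := Int.natAbs_ne_zero.mpr hm
  have hμ1 : ((p : ℤ)) ^ μ ∣ m := by
    have := natPow_dvd_int (z := m) (Nat.ordProj_dvd m.natAbs p)
    push_cast at this; exact this
  have hμ2 : ¬ ((p : ℤ)) ^ (μ + 1) ∣ m := by
    have := not_natPow_dvd_int (z := m) (Nat.pow_succ_factorization_not_dvd hmA hp)
    push_cast at this; exact this
  have hδ1 : ((p : ℤ)) ^ δ ∣ (d : ℤ) := by
    have := natPow_dvd_int (z := (d : ℤ)) (by simpa using Nat.ordProj_dvd d p)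
    push_cast at this; exact this
  have hδ2 : ¬ ((p : ℤ)) ^ (δ + 1) ∣ (d : ℤ) := by
    have := not_natPow_dvd_int (z := (d : ℤ))
      (by simpa using Nat.pow_succ_factorization_not_dvd hd0 hp)
    push_cast at this; exact this
  have hpδn : ((p : ℤ)) ^ (δ + 1) ∣ n := by
    rw [pow_succ, ← hDn']
    exact mul_dvd_mul hδ1 hpn'
  have hδm : ¬ ((p : ℤ)) ^ (δ + 1) ∣ m := by
    intro h
    exact hδ2 (hd ▸ Int.dvd_coe_gcd h hpδn)
  have hμδ : μ ≤ δ := by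
    by_contra hlt
    push_neg at hlt
    exact hδm (dvd_trans (pow_dvd_pow _ hlt) hμ1)
  have hδμ : δ ≤ μ := by
    by_contra hlt
    push_neg at hlt
    exact hμ2 (dvd_trans (pow_dvd_pow _ hlt) (dvd_trans hδ1 hdm))
  have heq : δ = μ := le_antisymm hδμ hμδ
  have hD1 : ((p : ℤ)) ^ μ ∣ (d : ℤ) := heq ▸ hδ1
  have hq1 : ((p : ℤ)) ^ μ ∣ m - n := dvd_sub hμ1 (dvd_trans hD1 hdn)
  have hq2 : ¬ ((p : ℤ)) ^ (μ + 1) ∣ m - n := by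
    intro h
    have : ((p : ℤ)) ^ (μ + 1) ∣ m := by
      have := dvd_add h (heq ▸ hpδn)
      simpa using this
    exact hμ2 this
  exact NTcore m (d : ℤ) (m - n) p hp μ hq1 hq2 hμ1 hD1 c

end NT


section BSgrp
variable (m n : ℤ)

theorem bs_rel : (BS.t m n)⁻¹ * (BS.a m n) ^ m * BS.t m n = (BS.a m n) ^ n := by
  have hmem : ((FreeGroup.of 0)⁻¹ * (FreeGroup.of 1) ^ m * FreeGroup.of 0 *
      ((FreeGroup.of 1) ^ n)⁻¹ : FreeGroup (Fin 2)) ∈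
      Subgroup.normalClosure (BSRels m n) :=
    Subgroup.subset_normalClosure rfl
  have h1 : ((QuotientGroup.mk' (Subgroup.normalClosure (BSRels m n)))
      ((FreeGroup.of 0)⁻¹ * (FreeGroup.of 1) ^ m * FreeGroup.of 0 *
      ((FreeGroup.of 1) ^ n)⁻¹) : BS m n) = 1 := by
    rw [QuotientGroup.mk'_apply, QuotientGroup.eq_one_iff]
    exact hmem
  have ht : (QuotientGroup.mk' (Subgroup.normalClosure (BSRels m n)))
      (FreeGroup.of (0 : Fin 2)) = BS.t m n := rfl
  have ha : (QuotientGroup.mk' (Subgroup.normalClosure (BSRels m n)))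
      (FreeGroup.of (1 : Fin 2)) = BS.a m n := rfl
  simp only [map_mul, map_inv, map_zpow, ht, ha] at h1
  have := mul_inv_eq_one.mp h1
  exact this

def bb (k : ℤ) : BS m n := (BS.t m n) ^ (-k) * BS.a m n * (BS.t m n) ^ k

theorem bb_zpow (k r : ℤ) :
    (bb m n k) ^ r = (BS.t m n) ^ (-k) * (BS.a m n) ^ r * (BS.t m n) ^ k := by
  have h : bb m n k = (BS.t m n) ^ (-k) * BS.a m n * ((BS.t m n) ^ (-k))⁻¹ := by
    rw [bb]; congr 1; rw [← zpow_neg, neg_neg]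
  rw [h, conj_zpow']
  congr 1
  rw [← zpow_neg, neg_neg]

theorem bb_zero : bb m n 0 = BS.a m n := by simp [bb]

theorem bb_succ (k : ℤ) : bb m n (k + 1) = (BS.t m n)⁻¹ * bb m n k * BS.t m n := by
  rw [bb, bb, show -(k+1) = -1 + -k by ring, show k+1 = k+1 by rfl,
    zpow_add, zpow_add, zpow_neg_one, zpow_one]
  group

theorem bb_rel (k : ℤ) : (bb m n (k + 1)) ^ m = (bb m n k) ^ n := by
  rw [bb_zpow, bb_zpow, show -(k+1) = -k + -1 by ring, show k+1 = 1+k by ring,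
    zpow_add, zpow_add, zpow_neg_one, zpow_one]
  calc (BS.t m n) ^ (-k) * (BS.t m n)⁻¹ * (BS.a m n) ^ m * ((BS.t m n) * (BS.t m n) ^ k)
      = (BS.t m n) ^ (-k) * ((BS.t m n)⁻¹ * (BS.a m n) ^ m * (BS.t m n)) * (BS.t m n) ^ k := by
        group
  _ = (BS.t m n) ^ (-k) * (BS.a m n) ^ n * (BS.t m n) ^ k := by rw [bs_rel]

theorem comm_am_tinv (j : ℤ) :
    ⁅(BS.a m n) ^ (m * j), (BS.t m n)⁻¹⁆ = (BS.a m n) ^ ((m - n) * j) := by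
  have hconj : ∀ r : ℤ, (BS.t m n)⁻¹ * (BS.a m n) ^ (m * r) * BS.t m n
      = (BS.a m n) ^ (n * r) := by
    intro r
    rw [zpow_mul, zpow_mul, conj_zpow₂, bs_rel]
  have h2 : (BS.t m n)⁻¹ * (BS.a m n) ^ (-(m * j)) * BS.t m n
      = (BS.a m n) ^ (-(n * j)) := by
    have := hconj (-j)
    rw [show m * -j = -(m * j) by ring, show n * -j = -(n * j) by ring] at this
    exact this
  calc ⁅(BS.a m n) ^ (m * j), (BS.t m n)⁻¹⁆
      = (BS.a m n) ^ (m * j) * ((BS.t m n)⁻¹ * (BS.a m n) ^ (-(m * j)) * BS.t m n) := by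
        rw [commutatorElement_def]
        rw [zpow_neg]
        group
  _ = (BS.a m n) ^ (m * j) * (BS.a m n) ^ (-(n * j)) := by rw [h2]
  _ = (BS.a m n) ^ ((m - n) * j) := by rw [← zpow_add]; ring_nf

theorem a_pow_F_mem (c : ℕ) :
    (BS.a m n) ^ (FF (m - n) m c) ∈ (⊤ : Subgroup (BS m n)).lowerCentralSeries c := by
  induction c with
  | zero => exact Subgroup.mem_top _
  | succ c ih =>
    have hgF : ((Int.gcd (FF (m - n) m c) m : ℕ) : ℤ) ∣ FF (m - n) m c := Int.gcd_dvd_left _ _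
    have hgm : ((Int.gcd (FF (m - n) m c) m : ℕ) : ℤ) ∣ m := Int.gcd_dvd_right _ _
    set F := FF (m - n) m c with hF
    set g : ℤ := ((Int.gcd F m : ℕ) : ℤ) with hg
    set j : ℤ := F / g with hj
    have hswap : m * j = F * (m / g) := by
      obtain ⟨F', hF'⟩ := hgF
      obtain ⟨m'', hm''⟩ := hgm
      by_cases h0 : g = 0
      · have hF0 : F = 0 := by rw [hF', h0, zero_mul]
        have hm0 : m = 0 := by rw [hm'', h0, zero_mul]
        simp [hF0, hm0]
      · rw [hj, hF', hm'', Int.mul_ediv_cancel_left _ h0, Int.mul_ediv_cancel_left _ h0]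
        ring
    have hL : (BS.a m n) ^ (m * j) ∈ (⊤ : Subgroup (BS m n)).lowerCentralSeries c := by
      rw [hswap, zpow_mul]
      exact Subgroup.zpow_mem _ ih _
    have hmem : ⁅(BS.a m n) ^ (m * j), (BS.t m n)⁻¹⁆
        ∈ (⊤ : Subgroup (BS m n)).lowerCentralSeries (c + 1) := by
      show _ ∈ ⁅(⊤ : Subgroup (BS m n)).lowerCentralSeries c, (⊤ : Subgroup (BS m n))⁆
      exact Subgroup.commutator_mem_commutator hL (Subgroup.mem_top _)
    rw [comm_am_tinv] at hmem
    have : FF (m - n) m (c + 1) = (m - n) * j := rfl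
    rw [this]
    exact hmem

end BSgrp

-- MAIN PART (to be appended; assumes context from earlier parts)
section Main
variable (m n : ℤ)

theorem bb_in_lcs (c : ℕ) (k : ℤ) :
    (bb m n k) ^ (FF (m - n) m c) ∈ (⊤ : Subgroup (BS m n)).lowerCentralSeries c := by
  rw [bb_zpow]
  have h := (inferInstance : ((⊤ : Subgroup (BS m n)).lowerCentralSeries c).Normal).conj_mem _ (a_pow_F_mem m n c)
      ((BS.t m n) ^ (-k))
  have he : ((BS.t m n) ^ (-k))⁻¹ = (BS.t m n) ^ k := by rw [← zpow_neg, neg_neg]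
  rwa [he] at h

theorem main_claim (hm : 0 < m) (hmn : m ≤ |n|) (d : ℕ) (hd : (d : ℤ) = Int.gcd m n) :
    ∀ (c : ℕ) (i j : ℤ),
      ⁅(bb m n i) ^ ((d : ℕ) : ℤ), bb m n j⁆ ∈ (⊤ : Subgroup (BS m n)).lowerCentralSeries c := by
  have hm0 : m ≠ 0 := hm.ne'
  have hn0 : n ≠ 0 := by
    intro h
    rw [h] at hmn
    simp at hmn
    omega
  have hdm : ((d : ℕ) : ℤ) ∣ m := hd ▸ Int.gcd_dvd_left _ _
  have hdn : ((d : ℕ) : ℤ) ∣ n := hd ▸ Int.gcd_dvd_right _ _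
  have hD0 : ((d : ℕ) : ℤ) ≠ 0 := by
    intro h
    rw [h] at hd
    exact hm0 (Int.gcd_eq_zero_iff.mp (by exact_mod_cast hd.symm)).1
  set D : ℤ := ((d : ℕ) : ℤ) with hDdef
  set m' : ℤ := m / D with hm'def
  set n' : ℤ := n / D with hn'def
  have hDm' : D * m' = m := Int.mul_ediv_cancel' hdm
  have hDn' : D * n' = n := Int.mul_ediv_cancel' hdn
  intro c
  induction c with
  | zero => intro i j; exact Subgroup.mem_top _
  | succ c IH =>
    set N := (⊤ : Subgroup (BS m n)).lowerCentralSeries (c + 1) with hN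
    set φ := QuotientGroup.mk' N with hφdef
    have hker : ∀ x : BS m n, φ x = 1 ↔ x ∈ N := by
      intro x
      rw [hφdef, QuotientGroup.mk'_apply]
      exact QuotientGroup.eq_one_iff x
    have hsucc : ∀ x g : BS m n, x ∈ (⊤ : Subgroup (BS m n)).lowerCentralSeries c → ⁅x, g⁆ ∈ N := by
      intro x g hx
      show ⁅x, g⁆ ∈ ⁅(⊤ : Subgroup (BS m n)).lowerCentralSeries c, (⊤ : Subgroup (BS m n))⁆
      exact Subgroup.commutator_mem_commutator hx (Subgroup.mem_top _)
    have hcent : ∀ x : BS m n, x ∈ (⊤ : Subgroup (BS m n)).lowerCentralSeries c →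
        ∀ q : (BS m n) ⧸ N, Commute (φ x) q := by
      intro x hx q
      obtain ⟨g, rfl⟩ := QuotientGroup.mk'_surjective N q
      have h1 : φ ⁅x, g⁆ = 1 := (hker _).mpr (hsucc x g hx)
      rw [map_commutatorElement] at h1
      exact commutatorElement_eq_one_iff_commute.mp h1
    set β : ℤ → (BS m n) ⧸ N := fun k => φ (bb m n k) with hβdef
    have hβpow : ∀ k r : ℤ, (β k) ^ r = φ ((bb m n k) ^ r) := by
      intro k r
      rw [hβdef]
      exact (map_zpow φ _ r).symm
    have hucent : ∀ i j : ℤ, ∀ q, Commute ⁅(β i) ^ D, β j⁆ q := by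
      intro i j q
      have h1 : ⁅(β i) ^ D, β j⁆ = φ ⁅(bb m n i) ^ D, bb m n j⁆ := by
        rw [map_commutatorElement, hβpow]
      rw [h1]
      exact hcent _ (IH i j) q
    -- shift invariance
    have hshift1 : ∀ i j : ℤ, ⁅(β (i + 1)) ^ D, β (j + 1)⁆ = ⁅(β i) ^ D, β j⁆ := by
      intro i j
      have hb : ∀ k : ℤ, β (k + 1) = (φ (BS.t m n))⁻¹ * β k * ((φ (BS.t m n))⁻¹)⁻¹ := by
        intro k
        rw [hβdef]
        show φ (bb m n (k + 1)) = _
        rw [bb_succ, map_mul, map_mul, map_inv, inv_inv]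
      rw [hb i, hb j, conj_zpow', conj_comm']
      exact conj_eq_self (hucent i j ((φ (BS.t m n))⁻¹))
    have hshifts : ∀ s i j : ℤ, ⁅(β (i + s)) ^ D, β (j + s)⁆ = ⁅(β i) ^ D, β j⁆ := by
      intro s
      induction s using Int.induction_on with
      | zero => intro i j; simp
      | succ s ih =>
        intro i j
        have h1 := hshift1 (i + s) (j + s)
        rw [show i + ((s : ℤ) + 1) = (i + s) + 1 by ring,
          show j + ((s : ℤ) + 1) = (j + s) + 1 by ring, h1]
        exact ih i j
      | pred s ih =>
        intro i j
        have h1 := hshift1 (i + (-(s : ℤ) - 1)) (j + (-(s : ℤ) - 1))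
        rw [show i + (-(s : ℤ) - 1) + 1 = i + -(s : ℤ) by ring,
          show j + (-(s : ℤ) - 1) + 1 = j + -(s : ℤ) by ring] at h1
        rw [show i + (-(s : ℤ) - 1) = i + (-(s : ℤ) - 1) from rfl] 
        calc ⁅(β (i + (-(s : ℤ) - 1))) ^ D, β (j + (-(s : ℤ) - 1))⁆
            = ⁅(β (i + -(s : ℤ))) ^ D, β (j + -(s : ℤ))⁆ := h1.symm
        _ = ⁅(β i) ^ D, β j⁆ := ih i j
    set v : ℤ → (BS m n) ⧸ N := fun k => ⁅(β k) ^ D, β 0⁆ with hvdef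
    have huv : ∀ i j : ℤ, ⁅(β i) ^ D, β j⁆ = v (i - j) := by
      intro i j
      have := hshifts j (i - j) 0
      rw [show i - j + j = i by ring, show (0 : ℤ) + j = j by ring] at this
      simp only [hvdef]
      exact this
    have hvcent : ∀ k : ℤ, ∀ q, Commute (v k) q := fun k q => hucent k 0 q
    have hv0 : v 0 = 1 :=
      commutatorElement_eq_one_iff_commute.mpr ((Commute.refl (β 0)).zpow_left D)
    -- R1
    have hR1 : ∀ k : ℤ, v k ^ m' = v (k - 1) ^ n' := by
      intro k
      have e1 : v k ^ m' = ⁅(β k) ^ m, β 0⁆ := by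
        calc v k ^ m' = ⁅((β k) ^ D) ^ m', β 0⁆ :=
              (comm_zpow_left ((β k) ^ D) (β 0) (v k) rfl (hvcent k) m').symm
        _ = ⁅(β k) ^ (D * m'), β 0⁆ := by rw [← zpow_mul]
        _ = ⁅(β k) ^ m, β 0⁆ := by rw [hDm']
      have e2 : (β k) ^ m = (β (k - 1)) ^ n := by
        rw [hβpow, hβpow]
        congr 1
        have h := bb_rel m n (k - 1)
        rwa [show k - 1 + 1 = k by ring] at h
      have e3 : ⁅(β (k - 1)) ^ n, β 0⁆ = v (k - 1) ^ n' := by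
        calc ⁅(β (k - 1)) ^ n, β 0⁆ = ⁅(β (k - 1)) ^ (D * n'), β 0⁆ := by rw [hDn']
        _ = ⁅((β (k - 1)) ^ D) ^ n', β 0⁆ := by rw [zpow_mul]
        _ = v (k - 1) ^ n' :=
              comm_zpow_left ((β (k - 1)) ^ D) (β 0) (v (k - 1)) rfl (hvcent (k - 1)) n'
      rw [e1, e2, e3]
    -- R2
    have hR2 : ∀ k : ℤ, v k ^ n = v (k - 1) ^ m := by
      intro k
      have e1 : ⁅(β k) ^ D, (β 0) ^ n⁆ = v k ^ n :=
        comm_zpow_right ((β k) ^ D) (β 0) (v k) rfl (hvcent k) n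
      have e2 : (β 0) ^ n = ((β 1) ^ D) ^ m' := by
        rw [← zpow_mul, hDm', hβpow, hβpow]
        congr 1
        have h := bb_rel m n 0
        rw [show (0 : ℤ) + 1 = 1 by ring] at h
        exact h.symm
      have hz1 : ⁅(β k) ^ D, β 1⁆ = v (k - 1) := huv k 1
      have hz1c : ∀ q, Commute (v (k - 1)) q := hvcent (k - 1)
      have hz1c' : ∀ q, Commute ⁅(β k) ^ D, β 1⁆ q := hucent k 1
      have e3 : ⁅(β k) ^ D, (β 1) ^ D⁆ = v (k - 1) ^ D := by
        rw [comm_zpow_right ((β k) ^ D) (β 1) ⁅(β k) ^ D, β 1⁆ rfl hz1c' D, hz1]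
      have e3c : ∀ q, Commute (v (k - 1) ^ D) q := fun q => (hz1c q).zpow_left D
      have e4 : ⁅(β k) ^ D, ((β 1) ^ D) ^ m'⁆ = (v (k - 1) ^ D) ^ m' :=
        comm_zpow_right ((β k) ^ D) ((β 1) ^ D) (v (k - 1) ^ D) e3 e3c m'
      calc v k ^ n = ⁅(β k) ^ D, (β 0) ^ n⁆ := e1.symm
      _ = ⁅(β k) ^ D, ((β 1) ^ D) ^ m'⁆ := by rw [e2]
      _ = (v (k - 1) ^ D) ^ m' := e4
      _ = v (k - 1) ^ m := by rw [← zpow_mul, hDm']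
    -- S relation
    set SS : ℤ := FF (m - n) m c / ((Int.gcd (FF (m - n) m c) D : ℕ) : ℤ) with hSSdef
    have hSrel : ∀ k : ℤ, v k ^ SS = 1 := by
      intro k
      have hgF : ((Int.gcd (FF (m - n) m c) D : ℕ) : ℤ) ∣ FF (m - n) m c := Int.gcd_dvd_left _ _
      have hgD : ((Int.gcd (FF (m - n) m c) D : ℕ) : ℤ) ∣ D := Int.gcd_dvd_right _ _
      have hg0 : ((Int.gcd (FF (m - n) m c) D : ℕ) : ℤ) ≠ 0 := by
        intro h
        obtain ⟨y, hy⟩ := hgD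
        rw [h, zero_mul] at hy
        exact hD0 hy
      have hDS : D * SS = FF (m - n) m c * (D / ((Int.gcd (FF (m - n) m c) D : ℕ) : ℤ)) := by
        rw [hSSdef]
        exact div_swap hgF hgD hg0
      have hmem1 : (bb m n k) ^ (D * SS) ∈ (⊤ : Subgroup (BS m n)).lowerCentralSeries c := by
        rw [hDS, zpow_mul]
        exact Subgroup.zpow_mem _ (bb_in_lcs m n c k) _
      have hmem2 : ⁅(bb m n k) ^ (D * SS), bb m n 0⁆ ∈ N := hsucc _ _ hmem1
      have h1 : ⁅(β k) ^ (D * SS), β 0⁆ = 1 := by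
        have h2 := (hker _).mpr hmem2
        rw [map_commutatorElement, ← hβpow] at h2
        exact h2
      calc v k ^ SS = ⁅((β k) ^ D) ^ SS, β 0⁆ :=
            (comm_zpow_left ((β k) ^ D) (β 0) (v k) rfl (hvcent k) SS).symm
      _ = ⁅(β k) ^ (D * SS), β 0⁆ := by rw [← zpow_mul]
      _ = 1 := h1
    -- number theory
    have ntA : Int.gcd m' ((Int.gcd n SS : ℕ) : ℤ) = 1 := by
      by_contra hne
      obtain ⟨p, hp, hpdvd⟩ := Nat.exists_prime_and_dvd hne
      have hpz : ((p : ℕ) : ℤ) ∣ ((Int.gcd m' ((Int.gcd n SS : ℕ) : ℤ) : ℕ) : ℤ) :=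
        Int.natCast_dvd_natCast.mpr hpdvd
      have h1 : ((p : ℕ) : ℤ) ∣ m' := dvd_trans hpz (Int.gcd_dvd_left _ _)
      have h23 : ((p : ℕ) : ℤ) ∣ ((Int.gcd n SS : ℕ) : ℤ) := dvd_trans hpz (Int.gcd_dvd_right _ _)
      have h2 : ((p : ℕ) : ℤ) ∣ n := dvd_trans h23 (Int.gcd_dvd_left _ _)
      have h3 : ((p : ℕ) : ℤ) ∣ SS := dvd_trans h23 (Int.gcd_dvd_right _ _)
      exact sideA m n hm0 hn0 d hd p hp m' hDm' h1 h2 c h3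
    have ntB : Int.gcd n' ((Int.gcd m SS : ℕ) : ℤ) = 1 := by
      by_contra hne
      obtain ⟨p, hp, hpdvd⟩ := Nat.exists_prime_and_dvd hne
      have hpz : ((p : ℕ) : ℤ) ∣ ((Int.gcd n' ((Int.gcd m SS : ℕ) : ℤ) : ℕ) : ℤ) :=
        Int.natCast_dvd_natCast.mpr hpdvd
      have h1 : ((p : ℕ) : ℤ) ∣ n' := dvd_trans hpz (Int.gcd_dvd_left _ _)
      have h23 : ((p : ℕ) : ℤ) ∣ ((Int.gcd m SS : ℕ) : ℤ) := dvd_trans hpz (Int.gcd_dvd_right _ _)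
      have h2 : ((p : ℕ) : ℤ) ∣ m := dvd_trans h23 (Int.gcd_dvd_left _ _)
      have h3 : ((p : ℕ) : ℤ) ∣ SS := dvd_trans h23 (Int.gcd_dvd_right _ _)
      exact sideB m n hm0 hn0 d hd p hp n' hDn' h1 h2 c h3
    -- kill all v k
    have hkill : ∀ k : ℤ, v k = 1 := by
      intro k
      induction k using Int.induction_on with
      | zero => exact hv0
      | succ k ih =>
        have e1 : v ((k : ℤ) + 1) ^ m' = 1 := by
          rw [hR1, show (k : ℤ) + 1 - 1 = (k : ℤ) by ring, ih, one_zpow]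
        have e2 : v ((k : ℤ) + 1) ^ n = 1 := by
          rw [hR2, show (k : ℤ) + 1 - 1 = (k : ℤ) by ring, ih, one_zpow]
        exact eliminate _ m' n SS e1 e2 (hSrel _) ntA
      | pred k ih =>
        have h1 := hR1 (-(k : ℤ))
        rw [ih, one_zpow] at h1
        have h2 := hR2 (-(k : ℤ))
        rw [ih, one_zpow] at h2
        have e1 : v (-(k : ℤ) - 1) ^ n' = 1 := h1.symm
        have e2 : v (-(k : ℤ) - 1) ^ m = 1 := h2.symm
        exact eliminate _ n' m SS e1 e2 (hSrel _) ntB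
    intro i j
    have h1 : φ ⁅(bb m n i) ^ D, bb m n j⁆ = 1 := by
      rw [map_commutatorElement, ← hβpow]
      show ⁅(β i) ^ D, β j⁆ = 1
      rw [huv i j]
      exact hkill _
    exact (hker _).mp h1

end Main

theorem commElt_eq {G : Type*} [Group G] (x y : G) : commElt x y = ⁅x⁻¹, y⁻¹⁆ := by
  simp [commElt, commutatorElement_def]

theorem commElt_mem {G : Type*} [Group G] (N : Subgroup G) [N.Normal] (u w : G)
    (h : ⁅u, w⁆ ∈ N) (x y : ℤ) : commElt (u ^ x) (w ^ y) ∈ N := by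
  set φ := QuotientGroup.mk' N with hφ
  have h1 : φ ⁅u, w⁆ = 1 := by
    rw [hφ, QuotientGroup.mk'_apply, QuotientGroup.eq_one_iff]
    exact h
  rw [map_commutatorElement] at h1
  have hc : Commute (φ u) (φ w) := commutatorElement_eq_one_iff_commute.mp h1
  have h2 : φ (commElt (u ^ x) (w ^ y)) = 1 := by
    rw [commElt_eq, map_commutatorElement, map_inv, map_inv, map_zpow, map_zpow]
    exact commutatorElement_eq_one_iff_commute.mpr ((hc.zpow_zpow x y).inv_left.inv_right)
  rw [hφ, QuotientGroup.mk'_apply, QuotientGroup.eq_one_iff] at h2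
  exact h2

end BSAux

theorem stmt10 (m n : ℤ) (hm : 0 < m) (hmn : m ≤ |n|) (d : ℕ) (hd : (d : ℤ) = Int.gcd m n)
    (k x y : ℤ) :
    commElt (((BS.t m n) ^ (-k) * (BS.a m n) ^ (d : ℤ) * (BS.t m n) ^ k) ^ x) ((BS.a m n) ^ y)
        ∈ lcsOmega (BS m n) ∧
    commElt (((BS.t m n) ^ (-k) * BS.a m n * (BS.t m n) ^ k) ^ y) (((BS.a m n) ^ (d : ℤ)) ^ x)
        ∈ lcsOmega (BS m n) := by
  have hbbd : (BSAux.bb m n k) ^ ((d : ℕ) : ℤ)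
      = (BS.t m n) ^ (-k) * (BS.a m n) ^ ((d : ℕ) : ℤ) * (BS.t m n) ^ k :=
    BSAux.bb_zpow m n k _
  constructor
  · rw [lcsOmega]
    apply Subgroup.mem_iInf.mpr
    intro c
    have h := BSAux.main_claim m n hm hmn d hd c k 0
    rw [BSAux.bb_zero] at h
    have h2 := BSAux.commElt_mem ((⊤ : Subgroup (BS m n)).lowerCentralSeries c) _ _ h x y
    rwa [hbbd] at h2
  · rw [lcsOmega]
    apply Subgroup.mem_iInf.mpr
    intro c
    have h := BSAux.main_claim m n hm hmn d hd c 0 k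
    have h2 : ⁅BSAux.bb m n k, (BSAux.bb m n 0) ^ ((d : ℕ) : ℤ)⁆
        ∈ (⊤ : Subgroup (BS m n)).lowerCentralSeries c := by
      rw [← commutatorElement_inv]
      exact Subgroup.inv_mem _ h
    rw [BSAux.bb_zero] at h2
    have h3 := BSAux.commElt_mem ((⊤ : Subgroup (BS m n)).lowerCentralSeries c) _ _ h2 y x
    exact h3
end

section
/- Let G = BS(m,n) be the Baumslag–Solitar group with 0 < m ≤ |n| and gcd(m,n) = 1. If n is not congruent to m modulo p for any prime number p, then γ_ω(G) equals the normal closure in G of the element a. -/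
lemma BS_relation (m n : ℤ) :
    (BS.t m n)⁻¹ * (BS.a m n) ^ m * BS.t m n = (BS.a m n) ^ n := by
  have h : ((FreeGroup.of 0)⁻¹ * (FreeGroup.of 1) ^ m * FreeGroup.of 0 *
      ((FreeGroup.of 1) ^ n)⁻¹ : FreeGroup (Fin 2)) ∈ Subgroup.normalClosure (BSRels m n) :=
    Subgroup.subset_normalClosure rfl
  have h1 : PresentedGroup.mk (BSRels m n) ((FreeGroup.of 0)⁻¹ * (FreeGroup.of 1) ^ m *
      FreeGroup.of 0 * ((FreeGroup.of 1) ^ n)⁻¹) = 1 := (QuotientGroup.eq_one_iff _).mpr h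
  simp only [map_mul, map_inv, map_zpow] at h1
  have h2 : (BS.t m n)⁻¹ * (BS.a m n) ^ m * BS.t m n * ((BS.a m n) ^ n)⁻¹ = 1 := h1
  exact mul_inv_eq_one.mp h2

open scoped commutatorElement

theorem stmt12 (m n : ℤ) (hm : 0 < m) (hmn : m ≤ |n|) (hgcd : Int.gcd m n = 1)
    (hcong : ∀ p : ℕ, p.Prime → ¬ (n ≡ m [ZMOD (p : ℤ)])) :
    lcsOmega (BS m n) = Subgroup.normalClosure {BS.a m n} := by
  -- First, deduce n = m + 1.
  have hdvd : ∀ p : ℕ, p.Prime → ¬ ((p : ℤ) ∣ (m - n)) := by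
    intro p hp hd
    exact hcong p hp (Int.modEq_iff_dvd.mpr hd)
  have habs : (m - n).natAbs = 1 := by
    by_contra hne
    have hp := Nat.minFac_prime hne
    have hd : ((m - n).natAbs.minFac : ℤ) ∣ (m - n) :=
      dvd_trans (Int.natCast_dvd_natCast.mpr (Nat.minFac_dvd _)) (Int.natAbs_dvd.mpr dvd_rfl)
    exact hdvd _ hp hd
  have hn : n = m + 1 := by
    rcases Int.natAbs_eq_iff.mp habs with h | h
    · exfalso
      rcases abs_cases n with ⟨h1, h2⟩ | ⟨h1, h2⟩ <;> rw [h1] at hmn <;> omega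
    · omega
  subst hn
  set G := BS m (m + 1)
  set a := BS.a m (m + 1) with ha
  set t := BS.t m (m + 1) with ht
  set N := Subgroup.normalClosure {a} with hN
  -- key commutator identity : a = ⁅(a^m)⁻¹, t⁻¹⁆
  have key : a = ⁅(a ^ m)⁻¹, t⁻¹⁆ := by
    have h := BS_relation m (m + 1)
    have h' : t⁻¹ * a ^ m * t = a ^ m * a := by
      rw [h, zpow_add, zpow_one]
    rw [commutatorElement_def, inv_inv, inv_inv, mul_assoc, mul_assoc, ← mul_assoc (t⁻¹), h']
    group
  -- a lies in every term of the lower central series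
  have mem_lcs : ∀ c, a ∈ (⊤ : Subgroup G).lowerCentralSeries c := by
    intro c
    induction c with
    | zero => exact Subgroup.mem_top _
    | succ c ih =>
      rw [Subgroup.lowerCentralSeries_succ, key]
      exact Subgroup.commutator_mem_commutator
        (Subgroup.inv_mem _ (Subgroup.zpow_mem _ ih m)) (Subgroup.mem_top _)
  have hNormal : (lcsOmega G).Normal := by
    constructor
    intro x hx g
    rw [lcsOmega, Subgroup.mem_iInf] at hx ⊢
    intro c
    exact Subgroup.Normal.conj_mem inferInstance x (hx c) g
  have h1 : N ≤ lcsOmega G :=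
    Subgroup.normalClosure_le_normal
      (Set.singleton_subset_iff.mpr (Subgroup.mem_iInf.mpr mem_lcs))
  have h2 : lcsOmega G ≤ N := by
    refine le_trans (iInf_le _ 1) ?_
    rw [Subgroup.top_lowerCentralSeries_one, commutator_def, Subgroup.commutator_le]
    intro g1 _ g2 _
    have hπ : ∀ g : G, ∃ k : ℤ, (QuotientGroup.mk' N t) ^ k = QuotientGroup.mk' N g := by
      intro g
      have hg : g ∈ (Subgroup.zpowers (QuotientGroup.mk' N t)).comap (QuotientGroup.mk' N) := by
        apply PresentedGroup.generated_by
        intro j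
        fin_cases j
        · exact Subgroup.mem_comap.mpr (Subgroup.mem_zpowers _)
        · have hmem : a ∈ N := Subgroup.subset_normalClosure rfl
          have : QuotientGroup.mk' N a = 1 := (QuotientGroup.eq_one_iff _).mpr hmem
          exact Subgroup.mem_comap.mpr (this ▸ one_mem _)
      exact Subgroup.mem_zpowers_iff.mp (Subgroup.mem_comap.mp hg)
    obtain ⟨k1, hk1⟩ := hπ g1
    obtain ⟨k2, hk2⟩ := hπ g2
    have hone : QuotientGroup.mk' N ⁅g1, g2⁆ = 1 := by
      rw [map_commutatorElement, ← hk1, ← hk2]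
      exact commutatorElement_eq_one_iff_commute.mpr ((Commute.refl _).zpow_zpow k1 k2)
    exact (QuotientGroup.eq_one_iff _).mp hone
  exact le_antisymm h2 h1
end

section
/- Let G = BS(m,n) be the Baumslag–Solitar group with 0 < m ≤ |n| and d = gcd(m,n). Then for all k ∈ ℤ: (1) [t^{-k} a^d t^k, a^d] ∈ [γ_ω(G), G]; (2) [t^{-k} a^d t^k, a]^d ∈ [γ_ω(G), G]; and (3) [t^{-k} a t^k, a^d]^d ∈ [γ_ω(G), G]. -/
open scoped commutatorElement

namespace AuxBS

variable {Q : Type*} [Group Q]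

lemma comm_mul_left (x y v : Q) : ⁅x * y, v⁆ = x * ⁅y, v⁆ * x⁻¹ * ⁅x, v⁆ := by
  simp only [commutatorElement_def]; group

lemma comm_zpow_left (u v : Q) (hz : ∀ w, Commute ⁅u, v⁆ w) (p : ℤ) :
    ⁅u ^ p, v⁆ = ⁅u, v⁆ ^ p := by
  induction p using Int.induction_on with
  | zero => simp
  | succ j ih =>
      have h1 : u ^ ((j : ℤ) + 1) = u * u ^ (j : ℤ) := by
        rw [← zpow_one_add]; ring_nf
      rw [h1, comm_mul_left, ih]
      have h2 : u * ⁅u, v⁆ ^ (j : ℤ) * u⁻¹ = ⁅u, v⁆ ^ (j : ℤ) := by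
        rw [((hz u).zpow_left j).symm.eq, mul_inv_cancel_right]
      rw [h2, ← zpow_add_one]
  | pred j ih =>
      have h1 : u ^ (-(j : ℤ)) = u * u ^ (-(j : ℤ) - 1) := by
        rw [← zpow_one_add]; ring_nf
      rw [h1, comm_mul_left] at ih
      have h2 : u * ⁅u ^ (-(j:ℤ) - 1), v⁆ * u⁻¹ = ⁅u, v⁆ ^ (-(j:ℤ)) * ⁅u, v⁆⁻¹ := by
        rw [← ih]; group
      have h3 : ⁅u ^ (-(j:ℤ) - 1), v⁆ = u⁻¹ * (⁅u, v⁆ ^ (-(j:ℤ)) * ⁅u, v⁆⁻¹) * u := by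
        rw [← h2]; group
      rw [h3]
      have h4 : Commute (⁅u, v⁆ ^ (-(j:ℤ)) * ⁅u, v⁆⁻¹) u :=
    ((hz u).zpow_left _).mul_left ((hz u).inv_left)
      rw [mul_assoc, h4.eq, ← mul_assoc, inv_mul_cancel, one_mul, ← zpow_sub_one]

lemma comm_zpow_right (u v : Q) (hz : ∀ w, Commute ⁅u, v⁆ w) (p : ℤ) :
    ⁅u, v ^ p⁆ = ⁅u, v⁆ ^ p := by
  have hz' : ∀ w, Commute ⁅v, u⁆ w := by
    intro w
    have := (hz w).inv_left
    rwa [commutatorElement_inv] at this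
  have := comm_zpow_left v u hz' p
  calc ⁅u, v ^ p⁆ = (⁅v ^ p, u⁆)⁻¹ := by rw [commutatorElement_inv]
    _ = (⁅v, u⁆ ^ p)⁻¹ := by rw [this]
    _ = (⁅v, u⁆⁻¹) ^ p := by rw [inv_zpow]
    _ = ⁅u, v⁆ ^ p := by rw [commutatorElement_inv]

end AuxBS

namespace AuxBS

variable {Q : Type*} [Group Q]

lemma eq_one_of_coprime_pows (x : Q) (m' n' : ℤ) (hco : IsCoprime m' n')
    (h1 : x ^ m' = 1) (h2 : x ^ n' = 1) : x = 1 := by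
  obtain ⟨u, v, huv⟩ := hco
  calc x = x ^ (u * m' + v * n') := by rw [huv, zpow_one]
    _ = (x ^ m') ^ u * (x ^ n') ^ v := by
        rw [zpow_add, mul_comm u m', mul_comm v n', zpow_mul, zpow_mul]
    _ = 1 := by rw [h1, h2]; simp

lemma core (T A : Q) (m' n' : ℤ) (hco : IsCoprime m' n')
    (hrel : ∀ k : ℤ, (T ^ (-(k + 1)) * A * T ^ (k + 1)) ^ m' = (T ^ (-k) * A * T ^ k) ^ n')
    (hcent : ∀ (k : ℤ) (w : Q), Commute ⁅T ^ (-k) * A * T ^ k, A⁆ w) (k : ℤ) :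
    Commute (T ^ (-k) * A * T ^ k) A := by
  set χ : ℤ → Q := fun k => ⁅T ^ (-k) * A * T ^ k, A⁆ with hχ
  have hstep : ∀ j : ℤ, χ (j + 1) ^ m' = χ j ^ n' := by
    intro j
    calc χ (j + 1) ^ m' = ⁅(T ^ (-(j + 1)) * A * T ^ (j + 1)) ^ m', A⁆ :=
          (comm_zpow_left _ _ (hcent (j + 1)) m').symm
      _ = ⁅(T ^ (-j) * A * T ^ j) ^ n', A⁆ := by rw [hrel j]
      _ = χ j ^ n' := comm_zpow_left _ _ (hcent j) n'
  have hneg : ∀ j : ℤ, χ (-j) = (χ j)⁻¹ := by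
    intro j
    have hc : T ^ (-j) * χ (-j) * (T ^ (-j))⁻¹ = χ (-j) := by
      rw [((hcent (-j) (T ^ (-j))).symm.eq), mul_inv_cancel_right]
    have hconj := conjugate_commutatorElement (T ^ (-(-j)) * A * T ^ (-j)) A (T ^ (-j))
    rw [hc] at hconj
    have e1 : T ^ (-j) * (T ^ (-(-j)) * A * T ^ (-j)) * (T ^ (-j))⁻¹ = A := by
      rw [neg_neg, zpow_neg]; group
    have e2 : T ^ (-j) * A * (T ^ (-j))⁻¹ = T ^ (-j) * A * T ^ j := by
      rw [zpow_neg, inv_inv]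
    rw [e1, e2] at hconj
    calc χ (-j) = ⁅A, T ^ (-j) * A * T ^ j⁆ := hconj
      _ = (χ j)⁻¹ := (commutatorElement_inv _ _).symm
  have hzero : χ 0 = 1 := by simp [hχ]
  have hnat : ∀ q : ℕ, χ q = 1 ∧ χ (-(q : ℤ)) = 1 := by
    intro q
    induction q with
    | zero =>
        simp only [Nat.cast_zero, neg_zero]
        exact ⟨hzero, hzero⟩
    | succ q ih =>
        have e1 : χ ((q : ℤ) + 1) ^ m' = 1 := by rw [hstep, ih.1]; simp
        have e2 : χ (-((q : ℤ) + 1)) ^ n' = 1 := by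
          have := hstep (-((q : ℤ) + 1))
          have harg : -((q : ℤ) + 1) + 1 = -(q : ℤ) := by ring
          rw [harg, ih.2] at this
          rw [← this]; simp
        have e3 : χ ((q : ℤ) + 1) ^ n' = 1 := by
          rw [hneg ((q : ℤ) + 1), inv_zpow, inv_eq_one] at e2
          exact e2
        have h1 : χ ((q : ℤ) + 1) = 1 := eq_one_of_coprime_pows _ _ _ hco e1 e3
        constructor
        · push_cast; exact h1
        · push_cast
          rw [hneg, h1]; simp
  rw [← commutatorElement_eq_one_iff_commute]
  obtain ⟨q, rfl | rfl⟩ := Int.eq_nat_or_neg k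
  · exact (hnat q).1
  · exact (hnat q).2

end AuxBS

namespace AuxBS

variable {Q : Type*} [Group Q]

lemma conj_t (t x : Q) (j p : ℤ) : (t ^ (-j) * x * t ^ j) ^ p = t ^ (-j) * x ^ p * t ^ j := by
  have h : t ^ j = (t ^ (-j))⁻¹ := by rw [zpow_neg, inv_inv]
  rw [h, conj_zpow]

lemma conj_pow_exists (T A : Q) (m' n' D : ℤ)
    (hrel : T⁻¹ * A ^ m' * T = A ^ n') (hD : A ^ D = 1)
    (hcm : IsCoprime m' D) (hcn : IsCoprime n' D) (j : ℤ) :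
    ∃ lam : ℤ, T ^ (-j) * A * T ^ j = A ^ lam := by
  obtain ⟨u, v, huv⟩ := hcm
  obtain ⟨w, v2, hwv⟩ := hcn
  have hAm : A = (A ^ m') ^ u := by
    calc A = A ^ (u * m' + v * D) := by rw [huv, zpow_one]
      _ = (A ^ m') ^ u * (A ^ D) ^ v := by
          rw [zpow_add, mul_comm u m', mul_comm v D, zpow_mul, zpow_mul]
      _ = (A ^ m') ^ u := by rw [hD]; simp
  have hAn : A = (A ^ n') ^ w := by
    calc A = A ^ (w * n' + v2 * D) := by rw [hwv, zpow_one]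
      _ = (A ^ n') ^ w * (A ^ D) ^ v2 := by
          rw [zpow_add, mul_comm w n', mul_comm v2 D, zpow_mul, zpow_mul]
      _ = (A ^ n') ^ w := by rw [hD]; simp
  have f1 : T⁻¹ * A * T = A ^ (n' * u) := by
    conv_lhs => rw [hAm]
    have : T⁻¹ * (A ^ m') ^ u * T = (T⁻¹ * A ^ m' * T) ^ u := by
      rw [(by group : T⁻¹ * A ^ m' * T = T⁻¹ * A ^ m' * T⁻¹⁻¹), conj_zpow]
      group
    rw [this, hrel, ← zpow_mul]
  have hrel' : T * A ^ n' * T⁻¹ = A ^ m' := by rw [← hrel]; group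
  have f2 : T * A * T⁻¹ = A ^ (m' * w) := by
    conv_lhs => rw [hAn]
    have : T * (A ^ n') ^ w * T⁻¹ = (T * A ^ n' * T⁻¹) ^ w := by
      rw [conj_zpow]
    rw [this, hrel', ← zpow_mul]
  induction j using Int.induction_on with
  | zero => exact ⟨1, by simp⟩
  | succ j ih =>
      obtain ⟨lam, ih⟩ := ih
      refine ⟨lam * (n' * u), ?_⟩
      have split : T ^ (-((j : ℤ) + 1)) * A * T ^ ((j : ℤ) + 1)
          = T ^ (-(j : ℤ)) * (T⁻¹ * A * T) * T ^ (j : ℤ) := by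
        have h1 : T ^ (-((j : ℤ) + 1)) = T ^ (-(j : ℤ)) * T⁻¹ := by
          rw [← zpow_sub_one]; ring_nf
        have h2 : T ^ ((j : ℤ) + 1) = T * T ^ (j : ℤ) := by
          rw [← zpow_one_add]; ring_nf
        rw [h1, h2]; group
      rw [split, f1, ← conj_t T A (j : ℤ) (n' * u), ih, ← zpow_mul]
  | pred j ih =>
      obtain ⟨lam, ih⟩ := ih
      refine ⟨lam * (m' * w), ?_⟩
      have split : T ^ (-(-(j : ℤ) - 1)) * A * T ^ (-(j : ℤ) - 1)
          = T ^ (-(-(j : ℤ))) * (T * A * T⁻¹) * T ^ (-(j : ℤ)) := by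
        have h1 : T ^ (-(-(j : ℤ) - 1)) = T ^ (-(-(j : ℤ))) * T := by
          rw [← zpow_add_one]; ring_nf
        have h2 : T ^ (-(j : ℤ) - 1) = T⁻¹ * T ^ (-(j : ℤ)) := by
          have he : (-(j : ℤ) - 1) = -1 + -(j : ℤ) := by ring
          rw [he, zpow_add, zpow_neg_one]
        rw [h1, h2]; group
      rw [split, f2, ← conj_t T A (-(j : ℤ)) (m' * w), ih, ← zpow_mul]

end AuxBS

namespace AuxBS

variable {G : Type*} [Group G]

lemma commElt_eq_bracket (x y : G) : commElt x y = ⁅x⁻¹, y⁻¹⁆ := by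
  rw [commElt, commutatorElement_def]; group

lemma commElt_eq_one_of_commute {x y : G} (h : Commute x y) : commElt x y = 1 := by
  rw [commElt_eq_bracket]
  exact (h.inv_inv).commutator_eq

lemma map_commElt {H : Type*} [Group H] (f : G →* H) (x y : G) :
    f (commElt x y) = commElt (f x) (f y) := by
  simp [commElt, map_mul, map_inv]

instance lcsOmega_normal : (lcsOmega G).Normal := by
  constructor
  intro x hx g
  rw [lcsOmega, Subgroup.mem_iInf] at hx ⊢
  intro c
  exact (inferInstance : ((⊤ : Subgroup G).lowerCentralSeries c).Normal).conj_mem x (hx c) g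

lemma central_in_quot {x : G} (hx : x ∈ lcsOmega G)
    (q : G ⧸ ⁅lcsOmega G, (⊤ : Subgroup G)⁆) :
    Commute ((QuotientGroup.mk' ⁅lcsOmega G, (⊤ : Subgroup G)⁆) x) q := by
  obtain ⟨g, rfl⟩ := QuotientGroup.mk'_surjective _ q
  rw [← commutatorElement_eq_one_iff_commute, ← map_commutatorElement]
  exact (QuotientGroup.eq_one_iff _).2
    (Subgroup.commutator_mem_commutator hx (Subgroup.mem_top g))

section BSabstract

variable (t a : G) (δ m' n' : ℤ)

/-- `D(c)`: `a^(δ (m'-n')^c) ∈ γ_{c+1}`. -/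
lemma lcs_pow_mem (hrel : t⁻¹ * a ^ (δ * m') * t = a ^ (δ * n')) :
    ∀ c : ℕ, a ^ (δ * (m' - n') ^ c) ∈ (⊤ : Subgroup G).lowerCentralSeries c := by
  intro c
  induction c with
  | zero => exact Subgroup.mem_top _
  | succ c ih =>
      set z : G := a ^ (δ * (m' - n') ^ c) with hz
      have hzm : z ^ m' = (a ^ (δ * m')) ^ ((m' - n') ^ c) := by
        rw [hz, ← zpow_mul, ← zpow_mul]
        congr 1
        ring
      have hzn : z ^ n' = (a ^ (δ * n')) ^ ((m' - n') ^ c) := by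
        rw [hz, ← zpow_mul, ← zpow_mul]
        congr 1
        ring
      have conj1 : t⁻¹ * z ^ m' * t = z ^ n' := by
        rw [hzm, hzn, ← hrel]
        rw [(by group : t⁻¹ * a ^ (δ * m') * t = t⁻¹ * a ^ (δ * m') * t⁻¹⁻¹), conj_zpow]
        group
      have conj2 : t⁻¹ * z ^ (-m') * t = z ^ (-n') := by
        rw [zpow_neg, zpow_neg, ← conj1]; group
      have keyeq : a ^ (δ * (m' - n') ^ (c + 1)) = ⁅z ^ m', t⁻¹⁆ := by
        rw [commutatorElement_def, inv_inv]
        calc a ^ (δ * (m' - n') ^ (c + 1)) = z ^ m' * z ^ (-n') := by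
              rw [hz, ← zpow_mul, ← zpow_mul, ← zpow_add]
              congr 1
              ring
          _ = z ^ m' * (t⁻¹ * z ^ (-m') * t) := by rw [conj2]
          _ = z ^ m' * t⁻¹ * (z ^ m')⁻¹ * t := by rw [← zpow_neg]; group
      rw [keyeq]
      exact Subgroup.commutator_mem_commutator (Subgroup.zpow_mem _ ih m')
        (Subgroup.mem_top _)

/-- `L(c)`: modulo `γ_{c+1}`, every conjugate `t^(-j) a^δ t^j` is a power of `a`. -/
lemma conj_image (hrel : t⁻¹ * a ^ (δ * m') * t = a ^ (δ * n'))
    (hco : IsCoprime m' n') (c : ℕ) (j : ℤ) :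
    ∃ lam : ℤ, (QuotientGroup.mk' ((⊤ : Subgroup G).lowerCentralSeries c)) (t ^ (-j) * a ^ δ * t ^ j)
      = (QuotientGroup.mk' ((⊤ : Subgroup G).lowerCentralSeries c)) (a ^ (δ * lam)) := by
  set π := QuotientGroup.mk' ((⊤ : Subgroup G).lowerCentralSeries c) with hπ
  have hpow : ∀ e : ℤ, (π (a ^ δ)) ^ e = π (a ^ (δ * e)) := by
    intro e
    rw [← map_zpow, ← zpow_mul]
  have hrelQ : (π t)⁻¹ * (π (a ^ δ)) ^ m' * (π t) = (π (a ^ δ)) ^ n' := by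
    rw [hpow, hpow, ← map_inv, ← map_mul, ← map_mul, hrel]
  have hDQ : (π (a ^ δ)) ^ ((m' - n') ^ c) = 1 := by
    rw [hpow]
    exact (QuotientGroup.eq_one_iff _).2 (lcs_pow_mem t a δ m' n' hrel c)
  have hcm : IsCoprime m' ((m' - n') ^ c) := by
    apply IsCoprime.pow_right
    have := (hco.neg_right).add_mul_left_right 1
    rwa [(by ring : -n' + m' * 1 = m' - n')] at this
  have hcn : IsCoprime n' ((m' - n') ^ c) := by
    apply IsCoprime.pow_right
    have := (hco.symm).add_mul_left_right (-1)
    rwa [(by ring : m' + n' * (-1) = m' - n')] at this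
  obtain ⟨lam, hlam⟩ := conj_pow_exists (π t) (π (a ^ δ)) m' n' ((m' - n') ^ c)
    hrelQ hDQ hcm hcn j
  refine ⟨lam, ?_⟩
  rw [map_mul, map_mul, map_zpow π t (-j), map_zpow π t j, hlam, hpow]

end BSabstract

end AuxBS

namespace AuxBS

variable {G : Type*} [Group G]

lemma y_pow_rel (t a : G) (δ m' n' : ℤ)
    (hrel : t⁻¹ * a ^ (δ * m') * t = a ^ (δ * n')) (k : ℤ) :
    (t ^ (-(k + 1)) * a ^ δ * t ^ (k + 1)) ^ m' = (t ^ (-k) * a ^ δ * t ^ k) ^ n' := by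
  rw [conj_t, conj_t, ← zpow_mul, ← zpow_mul]
  have h1 : t ^ (-(k + 1)) = t ^ (-k) * t⁻¹ := by rw [← zpow_sub_one]; ring_nf
  have h2 : t ^ (k + 1) = t * t ^ k := by rw [← zpow_one_add]; ring_nf
  rw [h1, h2, ← hrel]
  group

lemma mem_omega_yy (t a : G) (δ m' n' : ℤ)
    (hrel : t⁻¹ * a ^ (δ * m') * t = a ^ (δ * n')) (hco : IsCoprime m' n') (k : ℤ) :
    ⁅t ^ (-k) * a ^ δ * t ^ k, a ^ δ⁆ ∈ lcsOmega G := by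
  rw [lcsOmega, Subgroup.mem_iInf]
  intro c
  set π := QuotientGroup.mk' ((⊤ : Subgroup G).lowerCentralSeries c) with hπ
  refine (QuotientGroup.eq_one_iff _).1 ?_
  show π ⁅t ^ (-k) * a ^ δ * t ^ k, a ^ δ⁆ = 1
  rw [map_commutatorElement]
  obtain ⟨lam, hlam⟩ := conj_image t a δ m' n' hrel hco c k
  rw [hlam, commutatorElement_eq_one_iff_commute, map_zpow, map_zpow]
  exact (Commute.refl (π a)).zpow_zpow (δ * lam) δ

lemma mem_omega_ya (t a : G) (δ m' n' : ℤ)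
    (hrel : t⁻¹ * a ^ (δ * m') * t = a ^ (δ * n')) (hco : IsCoprime m' n') (k : ℤ) :
    commElt (t ^ (-k) * a ^ δ * t ^ k) a ∈ lcsOmega G := by
  rw [lcsOmega, Subgroup.mem_iInf]
  intro c
  set π := QuotientGroup.mk' ((⊤ : Subgroup G).lowerCentralSeries c) with hπ
  refine (QuotientGroup.eq_one_iff _).1 ?_
  show π (commElt (t ^ (-k) * a ^ δ * t ^ k) a) = 1
  rw [map_commElt]
  apply commElt_eq_one_of_commute
  obtain ⟨lam, hlam⟩ := conj_image t a δ m' n' hrel hco c k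
  rw [hlam, map_zpow]
  exact (Commute.refl (π a)).zpow_left (δ * lam)

lemma mem_omega_wa (t a : G) (δ m' n' : ℤ)
    (hrel : t⁻¹ * a ^ (δ * m') * t = a ^ (δ * n')) (hco : IsCoprime m' n') (k : ℤ) :
    commElt (t ^ (-k) * a * t ^ k) (a ^ δ) ∈ lcsOmega G := by
  rw [lcsOmega, Subgroup.mem_iInf]
  intro c
  set π := QuotientGroup.mk' ((⊤ : Subgroup G).lowerCentralSeries c) with hπ
  refine (QuotientGroup.eq_one_iff _).1 ?_
  show π (commElt (t ^ (-k) * a * t ^ k) (a ^ δ)) = 1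
  rw [map_commElt]
  apply commElt_eq_one_of_commute
  obtain ⟨lam, hlam⟩ := conj_image t a δ m' n' hrel hco c (-k)
  rw [neg_neg] at hlam
  set T := π t with hT
  set α := π a with hα
  have hw : π (t ^ (-k) * a * t ^ k) = T ^ (-k) * α * T ^ k := by
    rw [map_mul, map_mul, map_zpow, map_zpow]
  have hB : π (a ^ δ) = α ^ δ := map_zpow π a δ
  have hF : T ^ k * α ^ δ * T ^ (-k) = α ^ (δ * lam) := by
    rw [← hB, ← map_zpow π t k, ← map_zpow π t (-k), ← map_mul, ← map_mul, hlam, map_zpow]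
  have hmid : α * (T ^ k * α ^ δ * T ^ (-k)) * α⁻¹ = T ^ k * α ^ δ * T ^ (-k) := by
    rw [hF, ((Commute.refl α).zpow_right (δ * lam)).eq, mul_inv_cancel_right]
  have hgoal : π (t ^ (-k) * a * t ^ k) * π (a ^ δ) * (π (t ^ (-k) * a * t ^ k))⁻¹
      = π (a ^ δ) := by
    rw [hw, hB]
    calc T ^ (-k) * α * T ^ k * α ^ δ * (T ^ (-k) * α * T ^ k)⁻¹
        = T ^ (-k) * (α * (T ^ k * α ^ δ * T ^ (-k)) * α⁻¹) * T ^ k := by group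
      _ = T ^ (-k) * (T ^ k * α ^ δ * T ^ (-k)) * T ^ k := by rw [hmid]
      _ = α ^ δ := by group
  rw [mul_inv_eq_iff_eq_mul] at hgoal
  exact hgoal

end AuxBS

open AuxBS

theorem stmt14 (m n : ℤ) (hm : 0 < m) (hmn : m ≤ |n|) (d : ℕ) (hd : (d : ℤ) = Int.gcd m n)
    (k : ℤ) :
    commElt ((BS.t m n) ^ (-k) * (BS.a m n) ^ (d : ℤ) * (BS.t m n) ^ k) ((BS.a m n) ^ (d : ℤ))
        ∈ ⁅lcsOmega (BS m n), (⊤ : Subgroup (BS m n))⁆ ∧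
    (commElt ((BS.t m n) ^ (-k) * (BS.a m n) ^ (d : ℤ) * (BS.t m n) ^ k) (BS.a m n)) ^ (d : ℤ)
        ∈ ⁅lcsOmega (BS m n), (⊤ : Subgroup (BS m n))⁆ ∧
    (commElt ((BS.t m n) ^ (-k) * BS.a m n * (BS.t m n) ^ k) ((BS.a m n) ^ (d : ℤ))) ^ (d : ℤ)
        ∈ ⁅lcsOmega (BS m n), (⊤ : Subgroup (BS m n))⁆ := by
  set t : BS m n := BS.t m n with ht
  set a : BS m n := BS.a m n with ha
  -- the defining relation
  have hrel1 : t⁻¹ * a ^ m * t = a ^ n := by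
    have hmem : ((FreeGroup.of 0)⁻¹ * (FreeGroup.of 1) ^ m * FreeGroup.of 0 *
        ((FreeGroup.of 1) ^ n)⁻¹ : FreeGroup (Fin 2)) ∈
        Subgroup.normalClosure (BSRels m n) :=
      Subgroup.subset_normalClosure rfl
    have h1 : (PresentedGroup.mk (BSRels m n)) ((FreeGroup.of 0)⁻¹ * (FreeGroup.of 1) ^ m *
        FreeGroup.of 0 * ((FreeGroup.of 1) ^ n)⁻¹) = 1 :=
      (QuotientGroup.eq_one_iff _).2 hmem
    rw [map_mul, map_mul, map_mul, map_inv, map_inv, map_zpow, map_zpow] at h1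
    have h2 : t⁻¹ * a ^ m * t * (a ^ n)⁻¹ = 1 := h1
    rw [mul_inv_eq_one] at h2
    exact h2
  -- gcd arithmetic
  have hdpos : 0 < Int.gcd m n := Int.gcd_pos_iff.2 (Or.inl hm.ne')
  set δ : ℤ := (d : ℤ) with hδ
  set m' : ℤ := m / δ with hm'
  set n' : ℤ := n / δ with hn'
  have hdvdm : δ ∣ m := by rw [hd]; exact Int.gcd_dvd_left _ _
  have hdvdn : δ ∣ n := by rw [hd]; exact Int.gcd_dvd_right _ _
  have hdm : m = δ * m' := (Int.mul_ediv_cancel' hdvdm).symm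
  have hdn : n = δ * n' := (Int.mul_ediv_cancel' hdvdn).symm
  have hco : IsCoprime m' n' := by
    rw [Int.isCoprime_iff_gcd_eq_one, hm', hn', hd]
    exact Int.gcd_div_gcd_div_gcd hdpos
  have hrel : t⁻¹ * a ^ (δ * m') * t = a ^ (δ * n') := by
    rw [← hdm, ← hdn]; exact hrel1
  -- the quotient by [γ_ω, G]
  set N : Subgroup (BS m n) := ⁅lcsOmega (BS m n), (⊤ : Subgroup (BS m n))⁆ with hN
  set π := QuotientGroup.mk' N with hπ
  have hcent : ∀ (j : ℤ) (w : BS m n ⧸ N),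
      Commute ⁅(π t) ^ (-j) * π (a ^ δ) * (π t) ^ j, π (a ^ δ)⁆ w := by
    intro j w
    have he : ⁅(π t) ^ (-j) * π (a ^ δ) * (π t) ^ j, π (a ^ δ)⁆
        = π ⁅t ^ (-j) * a ^ δ * t ^ j, a ^ δ⁆ := by
      rw [map_commutatorElement, map_mul, map_mul, map_zpow π t (-j), map_zpow π t j]
    rw [he]
    exact central_in_quot (mem_omega_yy t a δ m' n' hrel hco j) w
  have hrelQ : ∀ j : ℤ, ((π t) ^ (-(j + 1)) * π (a ^ δ) * (π t) ^ (j + 1)) ^ m'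
      = ((π t) ^ (-j) * π (a ^ δ) * (π t) ^ j) ^ n' := by
    intro j
    have h := congrArg π (y_pow_rel t a δ m' n' hrel j)
    rw [map_zpow, map_zpow, map_mul, map_mul, map_mul, map_mul,
      map_zpow π t (-(j + 1)), map_zpow π t (j + 1), map_zpow π t (-j), map_zpow π t j] at h
    exact h
  have hcomm : ∀ j : ℤ, Commute ((π t) ^ (-j) * π (a ^ δ) * (π t) ^ j) (π (a ^ δ)) :=
    fun j => core (π t) (π (a ^ δ)) m' n' hco hrelQ hcent j
  have hcommπ : ∀ j : ℤ, Commute (π (t ^ (-j) * a ^ δ * t ^ j)) (π (a ^ δ)) := by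
    intro j
    have := hcomm j
    rwa [← map_zpow π t (-j), ← map_zpow π t j, ← map_mul, ← map_mul] at this
  refine ⟨?_, ?_, ?_⟩
  · -- part 1
    refine (QuotientGroup.eq_one_iff _).1 ?_
    show π (commElt (t ^ (-k) * a ^ δ * t ^ k) (a ^ δ)) = 1
    rw [map_commElt]
    exact commElt_eq_one_of_commute (hcommπ k)
  · -- part 2
    refine (QuotientGroup.eq_one_iff _).1 ?_
    show π ((commElt (t ^ (-k) * a ^ δ * t ^ k) a) ^ δ) = 1
    rw [map_zpow, map_commElt, commElt_eq_bracket]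
    set u := π (t ^ (-k) * a ^ δ * t ^ k) with hu
    set b := π a with hb
    have hz : ∀ w, Commute ⁅u⁻¹, b⁻¹⁆ w := by
      intro w
      have he : ⁅u⁻¹, b⁻¹⁆ = π (commElt (t ^ (-k) * a ^ δ * t ^ k) a) := by
        rw [map_commElt, commElt_eq_bracket]
      rw [he]
      exact central_in_quot (mem_omega_ya t a δ m' n' hrel hco k) w
    rw [← comm_zpow_right u⁻¹ b⁻¹ hz δ, inv_zpow, commutatorElement_eq_one_iff_commute]
    apply Commute.inv_inv
    have : b ^ δ = π (a ^ δ) := (map_zpow π a δ).symm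
    rw [this]
    exact hcommπ k
  · -- part 3
    refine (QuotientGroup.eq_one_iff _).1 ?_
    show π ((commElt (t ^ (-k) * a * t ^ k) (a ^ δ)) ^ δ) = 1
    rw [map_zpow, map_commElt, commElt_eq_bracket]
    set v := π (t ^ (-k) * a * t ^ k) with hv
    set B := π (a ^ δ) with hB
    have hz : ∀ w, Commute ⁅v⁻¹, B⁻¹⁆ w := by
      intro w
      have he : ⁅v⁻¹, B⁻¹⁆ = π (commElt (t ^ (-k) * a * t ^ k) (a ^ δ)) := by
        rw [map_commElt, commElt_eq_bracket]
      rw [he]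
      exact central_in_quot (mem_omega_wa t a δ m' n' hrel hco k) w
    rw [← comm_zpow_left v⁻¹ B⁻¹ hz δ, inv_zpow, commutatorElement_eq_one_iff_commute]
    apply Commute.inv_inv
    have hvd : v ^ δ = π (t ^ (-k) * a ^ δ * t ^ k) := by
      rw [hv, ← map_zpow, conj_t]
    rw [hvd]
    exact hcommπ k
end
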